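/- arXiv:1602.04915 — 8 statements merged into one kernel-verified Lean document; each statement's English description precedes it below -/
import Mathlib

section
/- Let f : ℝ^d → ℝ be twice continuously differentiable with L-Lipschitz gradient, let 0 < α < 1/L, and let g(x) = x − α∇f(x). If C ⊆ ℝ^d is an at most countable set of critical points of f, each of which is a strict saddle, then the set {x₀ : lim_{k→∞} g^k(x₀) exists and belongs to C} has Lebesgue measure zero. -/
open MeasureTheory Filter Function RealInnerProductSpace
set_option maxHeartbeats 1000000

lemma preimage_null_of_det_ne_zero {d : ℕ} (φ : EuclideanSpace ℝ (Fin d) → EuclideanSpace ℝ (Fin d))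
    (hφ : ContDiff ℝ 1 φ) (hinj : Function.Injective φ)
    (hdet : ∀ x, (fderiv ℝ φ x).det ≠ 0)
    {N : Set (EuclideanSpace ℝ (Fin d))} (hN : volume N = 0) :
    volume (φ ⁻¹' N) = 0 := by
  set N' := toMeasurable volume N with hN'
  have hN'm : MeasurableSet N' := measurableSet_toMeasurable _ _
  have hN'0 : volume N' = 0 := by rw [measure_toMeasurable]; exact hN
  set s := φ ⁻¹' N' with hs
  have hsm : MeasurableSet s := hN'm.preimage (hφ.continuous.measurable)
  have hder : ∀ x ∈ s, HasFDerivWithinAt φ (fderiv ℝ φ x) s x :=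
    fun x _ => ((hφ.differentiable one_ne_zero) x).hasFDerivAt.hasFDerivWithinAt
  have hkey : (∫⁻ x in s, ENNReal.ofReal |(fderiv ℝ φ x).det| ∂volume) ≤ volume (φ '' s) :=
    lintegral_abs_det_fderiv_le_addHaar_image volume hsm hder (hinj.injOn)
  have himg : volume (φ '' s) = 0 :=
    measure_mono_null (Set.image_preimage_subset φ N') hN'0
  have h0 : (∫⁻ x in s, ENNReal.ofReal |(fderiv ℝ φ x).det| ∂volume) = 0 :=
    le_antisymm (hkey.trans himg.le) (zero_le)
  have hcont : Continuous fun x => ENNReal.ofReal |(fderiv ℝ φ x).det| := by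
    exact ENNReal.continuous_ofReal.comp
      ((continuous_abs.comp (ContinuousLinearMap.continuous_det.comp
        (hφ.continuous_fderiv one_ne_zero))))
  have hae := (lintegral_eq_zero_iff hcont.measurable).mp h0
  -- a.e. point of s has `ofReal |det| = 0`, but it is positive everywhere
  have hpos : ∀ x, (0 : ENNReal) < ENNReal.ofReal |(fderiv ℝ φ x).det| := by
    intro x
    rw [ENNReal.ofReal_pos]
    exact abs_pos.mpr (hdet x)
  have : volume.restrict s {x | ENNReal.ofReal |(fderiv ℝ φ x).det| ≠ 0} = 0 := by
    rw [Filter.EventuallyEq] at hae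
    simpa [ae_iff] using hae
  have hs0 : volume s = 0 := by
    apply le_antisymm _ (zero_le)
    have hsub : s ⊆ {x | ENNReal.ofReal |(fderiv ℝ φ x).det| ≠ 0} :=
      fun x _ => (hpos x).ne'
    calc volume s = volume.restrict s s := (Measure.restrict_apply_self _ _).symm
    _ ≤ volume.restrict s {x | ENNReal.ofReal |(fderiv ℝ φ x).det| ≠ 0} := measure_mono hsub
    _ = 0 := this
  exact measure_mono_null (Set.preimage_mono (subset_toMeasurable _ _)) hs0

lemma pi_null_of_unique_coord {d : ℕ} (i₀ : Fin d) (T : Set (Fin d → ℝ))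
    (hT : MeasurableSet T)
    (h : ∀ x ∈ T, ∀ y ∈ T, (∀ j, j ≠ i₀ → x j = y j) → x = y) :
    volume T = 0 := by
  classical
  set p : Fin d → Prop := fun j => j = i₀ with hp
  set e := MeasurableEquiv.piEquivPiSubtypeProd (fun _ : Fin d => ℝ) p with he
  have mp := MeasureTheory.volume_preserving_piEquivPiSubtypeProd (fun _ : Fin d => ℝ) p
  have hTimg : MeasurableSet (e '' T) := by
    rw [MeasurableEquiv.image_eq_preimage_symm]
    exact e.symm.measurable hT
  have hvol : volume T = volume (e '' T) := by
    have h1 := mp.measure_preimage hTimg.nullMeasurableSet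
    rw [Set.preimage_image_eq T e.injective] at h1
    convert h1 using 2
    congr!
  rw [hvol]
  have hprod : (volume : Measure ((∀ i : Subtype p, ℝ) × (∀ i : {j // ¬ p j}, ℝ)))
      = (volume : Measure (∀ i : Subtype p, ℝ)).prod volume := rfl
  rw [hprod, Measure.prod_apply_symm hTimg]
  have hz : ∀ y, (volume : Measure (∀ i : Subtype p, ℝ)) ((fun x => (x, y)) ⁻¹' (e '' T)) = 0 := by
    intro y
    have hkey : ∀ (a : Subtype p → ℝ) (j : Fin d) (hje : ¬ p j), e.symm (a, y) j = y ⟨j, hje⟩ := by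
      intro a j hje
      simp [he, MeasurableEquiv.piEquivPiSubtypeProd, Equiv.piEquivPiSubtypeProd_symm_apply, hje]
    have hsub : ((fun x => (x, y)) ⁻¹' (e '' T)).Subsingleton := by
      intro a ha a' ha'
      simp only [Set.mem_preimage] at ha ha'
      have hxy : e.symm (a, y) = e.symm (a', y) := by
        apply h
        · rcases ha with ⟨x, hx, hex⟩
          have hx2 : e.symm (a, y) = x := by rw [← hex]; simp
          rwa [hx2]
        · rcases ha' with ⟨x, hx, hex⟩
          have hx2 : e.symm (a', y) = x := by rw [← hex]; simp
          rwa [hx2]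
        · intro j hj
          have hje : ¬ p j := hj
          rw [hkey a j hje, hkey a' j hje]
      have h2 := congrArg e hxy
      simp only [MeasurableEquiv.apply_symm_apply] at h2
      exact (Prod.ext_iff.mp h2).1
    haveI : Nonempty (Subtype p) := ⟨⟨i₀, rfl⟩⟩
    exact hsub.measure_zero _
  simp [hz]


lemma euclidean_null_of_unique_coord {d : ℕ} (i₀ : Fin d)
    (S : Set (EuclideanSpace ℝ (Fin d))) (hS : MeasurableSet S)
    (h : ∀ x ∈ S, ∀ y ∈ S, (∀ j, j ≠ i₀ → x j = y j) → x = y) :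
    volume S = 0 := by
  have mp := EuclideanSpace.volume_preserving_symm_measurableEquiv_toLp (Fin d)
  set e := (MeasurableEquiv.toLp 2 (Fin d → ℝ)).symm with he
  have hT : MeasurableSet (e '' S) := by
    rw [MeasurableEquiv.image_eq_preimage_symm]
    exact e.symm.measurable hS
  have hv : volume S = volume (e '' S) := by
    have h1 := mp.measure_preimage hT.nullMeasurableSet
    rw [Set.preimage_image_eq S e.injective] at h1
    exact h1
  rw [hv]
  apply pi_null_of_unique_coord i₀ _ hT
  rintro ξ ⟨x, hx, rfl⟩ η ⟨y, hy, rfl⟩ hcoords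
  have hco : ∀ j, e x j = x j := fun j => rfl
  have hxy : x = y := h x hx y hy (fun j hj => hcoords j hj)
  rw [hxy]

lemma stable_set_null {d : ℕ} (A : EuclideanSpace ℝ (Fin d) →L[ℝ] EuclideanSpace ℝ (Fin d))
    (hsymm : ∀ u v, ⟪A u, v⟫ = ⟪u, A v⟫)
    (hexp : ∃ v, ‖v‖ ^ 2 < ⟪v, A v⟫)
    (hlow : ∀ v, -(‖v‖ ^ 2) ≤ ⟪v, A v⟫) :
    ∃ ε : ℝ, 0 < ε ∧ ∀ g : EuclideanSpace ℝ (Fin d) → EuclideanSpace ℝ (Fin d),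
      Continuous g → ∀ (l : EuclideanSpace ℝ (Fin d)) (ρ : ℝ), 0 < ρ →
      (∀ x ∈ Metric.closedBall l ρ, ∀ y ∈ Metric.closedBall l ρ,
        ‖g x - g y - A (x - y)‖ ≤ ε * ‖x - y‖) →
      volume {x | ∀ k, g^[k] x ∈ Metric.closedBall l ρ} = 0 := by
  classical
  have hT : (A : EuclideanSpace ℝ (Fin d) →ₗ[ℝ] EuclideanSpace ℝ (Fin d)).IsSymmetric :=
    fun u v => hsymm u v
  have hn : Module.finrank ℝ (EuclideanSpace ℝ (Fin d)) = d := finrank_euclideanSpace_fin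
  set b := hT.eigenvectorBasis hn with hb
  set a := hT.eigenvalues hn with ha
  have heig : ∀ i, A (b i) = a i • b i := fun i =>
    (hT.hasEigenvector_eigenvectorBasis hn i).apply_eq_smul
  have hinner : ∀ z w : EuclideanSpace ℝ (Fin d), ⟪z, w⟫ = ∑ j, ⟪b j, z⟫ * ⟪b j, w⟫ := by
    intro z w
    have h1 : ⟪z, w⟫ = ⟪b.repr z, b.repr w⟫ := (b.repr.inner_map_map z w).symm
    rw [h1, PiLp.inner_apply]
    simp [OrthonormalBasis.repr_apply_apply, RCLike.inner_apply]
    exact Finset.sum_congr rfl (fun j _ => mul_comm _ _)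
  have hnorm : ∀ z : EuclideanSpace ℝ (Fin d), ‖z‖ ^ 2 = ∑ j, ⟪b j, z⟫ ^ 2 := by
    intro z
    rw [← real_inner_self_eq_norm_sq, hinner]
    congr 1; ext j; ring
  have hAcoord : ∀ (z : EuclideanSpace ℝ (Fin d)) (j : Fin d), ⟪b j, A z⟫ = a j * ⟪b j, z⟫ := by
    intro z j
    rw [← hsymm, heig, real_inner_smul_left]
  have hext : ∀ z w : EuclideanSpace ℝ (Fin d), (∀ j, ⟪b j, z⟫ = ⟪b j, w⟫) → z = w := by
    intro z w hzw
    apply b.repr.injective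
    ext j
    rw [OrthonormalBasis.repr_apply_apply, OrthonormalBasis.repr_apply_apply]
    exact hzw j
  -- eigenvalue values
  have haval : ∀ i, a i = ⟪b i, A (b i)⟫ := by
    intro i
    rw [heig, real_inner_smul_right, real_inner_self_eq_norm_sq, b.orthonormal.1 i]
    norm_num
  have hage : ∀ i, -1 ≤ a i := by
    intro i
    have := hlow (b i)
    rw [← haval i] at this
    rwa [b.orthonormal.1 i, one_pow] at this
  set U : Finset (Fin d) := Finset.univ.filter (fun i => 1 < a i) with hUdef
  have hUne : U.Nonempty := by
    by_contra hUe
    rcases hexp with ⟨v, hv⟩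
    have hle : ∀ i, a i ≤ 1 := by
      intro i
      by_contra hgt
      exact hUe ⟨i, Finset.mem_filter.mpr ⟨Finset.mem_univ i, not_le.mp hgt⟩⟩
    have h1 : ⟪v, A v⟫ = ∑ j, a j * ⟪b j, v⟫ ^ 2 := by
      rw [hinner]
      congr 1; ext j; rw [hAcoord]; ring
    have h2 : ∑ j, a j * ⟪b j, v⟫ ^ 2 ≤ ∑ j, ⟪b j, v⟫ ^ 2 := by
      apply Finset.sum_le_sum
      intro j _
      nlinarith [sq_nonneg (⟪b j, v⟫ : ℝ), hle j]
    rw [h1] at hv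
    rw [hnorm] at hv
    linarith
  set μ : ℝ := U.inf' hUne a with hμdef
  have hμ : 1 < μ := by
    rw [hμdef, Finset.lt_inf'_iff]
    intro i hi
    exact (Finset.mem_filter.mp hi).2
  have hμle : ∀ i ∈ U, μ ≤ a i := fun i hi => Finset.inf'_le a hi
  set P : EuclideanSpace ℝ (Fin d) →L[ℝ] EuclideanSpace ℝ (Fin d) :=
    ∑ i ∈ U, (innerSL ℝ (b i)).smulRight (b i) with hPdef
  set Q : EuclideanSpace ℝ (Fin d) →L[ℝ] EuclideanSpace ℝ (Fin d) :=
    ContinuousLinearMap.id ℝ _ - P with hQdef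
  have hPQ : ∀ z, P z + Q z = z := by
    intro z; simp [hQdef]
  have hPco : ∀ (z : EuclideanSpace ℝ (Fin d)) (j : Fin d),
      ⟪b j, P z⟫ = if j ∈ U then ⟪b j, z⟫ else 0 := by
    intro z j
    rw [hPdef]
    rw [ContinuousLinearMap.sum_apply]
    rw [inner_sum]
    simp only [ContinuousLinearMap.smulRight_apply, innerSL_apply_apply, real_inner_smul_right]
    have : ∀ i ∈ U, ⟪b i, z⟫ * ⟪b j, b i⟫ = if i = j then ⟪b j, z⟫ else 0 := by
      intro i _
      rcases eq_or_ne i j with rfl | hne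
      · rw [real_inner_self_eq_norm_sq, b.orthonormal.1 i]; simp
      · rw [b.orthonormal.2 (Ne.symm hne)]
        simp [hne]
    rw [Finset.sum_congr rfl this, Finset.sum_ite_eq' U j (fun _ => ⟪b j, z⟫)]
  have hQco : ∀ (z : EuclideanSpace ℝ (Fin d)) (j : Fin d),
      ⟪b j, Q z⟫ = if j ∈ U then 0 else ⟪b j, z⟫ := by
    intro z j
    rw [hQdef]
    simp only [ContinuousLinearMap.sub_apply, ContinuousLinearMap.id_apply, inner_sub_right, hPco]
    rcases Finset.decidableMem j U with h | h <;> simp [h]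
  have sqfact : ∀ x y : ℝ, 0 ≤ x → 0 ≤ y → x ^ 2 ≤ y ^ 2 → x ≤ y := by
    intro x y hx hy h
    nlinarith
  have hPnorm : ∀ z, ‖P z‖ ≤ ‖z‖ := by
    intro z
    apply sqfact _ _ (norm_nonneg _) (norm_nonneg _)
    rw [hnorm, hnorm]
    calc ∑ j, ⟪b j, P z⟫ ^ 2 = ∑ j, if j ∈ U then ⟪b j, z⟫ ^ 2 else 0 := by
          apply Finset.sum_congr rfl
          intro j _
          rw [hPco]
          rcases Finset.decidableMem j U with h | h <;> simp [h]
    _ ≤ ∑ j, ⟪b j, z⟫ ^ 2 := by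
          apply Finset.sum_le_sum
          intro j _
          rcases Finset.decidableMem j U with h | h <;> simp [h, sq_nonneg]
  have hQnorm : ∀ z, ‖Q z‖ ≤ ‖z‖ := by
    intro z
    apply sqfact _ _ (norm_nonneg _) (norm_nonneg _)
    rw [hnorm, hnorm]
    calc ∑ j, ⟪b j, Q z⟫ ^ 2 = ∑ j, if j ∈ U then 0 else ⟪b j, z⟫ ^ 2 := by
          apply Finset.sum_congr rfl
          intro j _
          rw [hQco]
          rcases Finset.decidableMem j U with h | h <;> simp [h]
    _ ≤ ∑ j, ⟪b j, z⟫ ^ 2 := by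
          apply Finset.sum_le_sum
          intro j _
          rcases Finset.decidableMem j U with h | h <;> simp [h, sq_nonneg]
  have hPA : ∀ z, P (A z) = A (P z) := by
    intro z
    apply hext
    intro j
    rw [hPco, hAcoord, hAcoord, hPco]
    rcases Finset.decidableMem j U with h | h <;> simp [h]
  have hQA : ∀ z, Q (A z) = A (Q z) := by
    intro z
    have h1 : Q (A z) = A z - P (A z) := by simp [hQdef]
    have h2 : Q z = z - P z := by simp [hQdef]
    rw [h1, hPA, h2, map_sub]
  have hPexp : ∀ z, μ * ‖P z‖ ≤ ‖A (P z)‖ := by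
    intro z
    apply sqfact _ _ (by positivity) (norm_nonneg _)
    rw [mul_pow, hnorm, hnorm, Finset.mul_sum]
    apply Finset.sum_le_sum
    intro j _
    rw [hAcoord, hPco]
    rcases Finset.decidableMem j U with h | h
    · simp only [if_neg h]
      simp
    · simp only [if_pos h]
      have h1 : μ ≤ a j := hμle j h
      have h2 : 0 < μ := lt_trans one_pos hμ
      have h3 : μ ^ 2 ≤ (a j) ^ 2 := by nlinarith
      have h4 := mul_le_mul_of_nonneg_right h3 (sq_nonneg (⟪b j, z⟫ : ℝ))
      nlinarith [h4]
  have hQcontr : ∀ z, ‖A (Q z)‖ ≤ ‖Q z‖ := by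
    intro z
    apply sqfact _ _ (norm_nonneg _) (norm_nonneg _)
    rw [hnorm, hnorm]
    apply Finset.sum_le_sum
    intro j _
    rw [hAcoord, hQco]
    rcases Finset.decidableMem j U with h | h
    · simp only [if_neg h]
      have h1 : a j ≤ 1 := by
        by_contra hgt
        exact h (Finset.mem_filter.mpr ⟨Finset.mem_univ j, not_le.mp hgt⟩)
      have h2 : -1 ≤ a j := hage j
      have h3 : (a j) ^ 2 ≤ 1 := by nlinarith
      have h4 := mul_le_mul_of_nonneg_right h3 (sq_nonneg (⟪b j, z⟫ : ℝ))
      nlinarith [h4]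
    · simp only [if_pos h]
      simp
  refine ⟨(μ - 1)/5, by linarith, ?_⟩
  intro g hgc l ρ hρ hball
  set ε : ℝ := (μ - 1)/5 with hεdef
  have hε : 0 < ε := by rw [hεdef]; linarith
  set S := {x | ∀ k : ℕ, g^[k] x ∈ Metric.closedBall l ρ} with hSdef
  have hSm : MeasurableSet S := by
    have : S = ⋂ k : ℕ, (fun x => g^[k] x) ⁻¹' Metric.closedBall l ρ := by
      ext x; simp [hSdef, Set.mem_iInter]
    rw [this]
    exact (isClosed_iInter fun k =>
      Metric.isClosed_closedBall.preimage (hgc.iterate k)).measurableSet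
  set γ : ℝ := μ - 2*ε with hγdef
  have hγ1 : 1 < γ := by rw [hγdef, hεdef]; linarith
  have hγε : 1 + 2*ε ≤ γ := by rw [hγdef, hεdef]; linarith
  have key : ∀ x ∈ S, ∀ y ∈ S, ‖Q (x - y)‖ ≤ ‖P (x - y)‖ → x = y := by
    intro x hx y hy hQP
    have main : ∀ k : ℕ, ‖Q (g^[k] x - g^[k] y)‖ ≤ ‖P (g^[k] x - g^[k] y)‖ ∧
        γ^k * ‖P (x - y)‖ ≤ ‖P (g^[k] x - g^[k] y)‖ := by
      intro k
      induction k with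
      | zero => simpa using hQP
      | succ k ih =>
        obtain ⟨ih1, ih2⟩ := ih
        set δ := g^[k] x - g^[k] y with hδ
        have hxk : g^[k] x ∈ Metric.closedBall l ρ := hx k
        have hyk : g^[k] y ∈ Metric.closedBall l ρ := hy k
        have hδnorm : ‖δ‖ ≤ 2 * ‖P δ‖ := by
          calc ‖δ‖ = ‖P δ + Q δ‖ := by rw [hPQ]
          _ ≤ ‖P δ‖ + ‖Q δ‖ := norm_add_le _ _
          _ ≤ 2 * ‖P δ‖ := by linarith
        set w := g (g^[k] x) - g (g^[k] y) - A δ with hw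
        have hwnorm : ‖w‖ ≤ ε * ‖δ‖ := hball _ hxk _ hyk
        have hwP : ‖P w‖ ≤ ε * (2 * ‖P δ‖) :=
          le_trans (le_trans (hPnorm w) hwnorm) (mul_le_mul_of_nonneg_left hδnorm hε.le)
        have hwQ : ‖Q w‖ ≤ ε * (2 * ‖P δ‖) :=
          le_trans (le_trans (hQnorm w) hwnorm) (mul_le_mul_of_nonneg_left hδnorm hε.le)
        have hsucc : g^[k+1] x - g^[k+1] y = A δ + w := by
          rw [iterate_succ_apply', iterate_succ_apply', hw]
          abel
        have hP1 : γ * ‖P δ‖ ≤ ‖P (g^[k+1] x - g^[k+1] y)‖ := by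
          rw [hsucc, map_add, hPA]
          have h1 : ‖A (P δ)‖ ≤ ‖A (P δ) + P w‖ + ‖P w‖ := by
            calc ‖A (P δ)‖ = ‖(A (P δ) + P w) + (-(P w))‖ := by
                  congr 1; abel
            _ ≤ ‖A (P δ) + P w‖ + ‖-(P w)‖ := norm_add_le _ _
            _ = ‖A (P δ) + P w‖ + ‖P w‖ := by rw [norm_neg]
          have h3 := hPexp δ
          rw [hγdef]
          linarith
        have hQ1 : ‖Q (g^[k+1] x - g^[k+1] y)‖ ≤ γ * ‖P δ‖ := by
          rw [hsucc, map_add, hQA]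
          calc ‖A (Q δ) + Q w‖ ≤ ‖A (Q δ)‖ + ‖Q w‖ := norm_add_le _ _
          _ ≤ ‖Q δ‖ + ε * (2 * ‖P δ‖) := add_le_add (hQcontr δ) hwQ
          _ ≤ ‖P δ‖ + ε * (2 * ‖P δ‖) := by linarith
          _ = (1 + 2*ε) * ‖P δ‖ := by ring
          _ ≤ γ * ‖P δ‖ := mul_le_mul_of_nonneg_right hγε (norm_nonneg _)
        refine ⟨le_trans hQ1 hP1, ?_⟩
        calc γ^(k+1) * ‖P (x-y)‖ = γ * (γ^k * ‖P (x-y)‖) := by ring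
        _ ≤ γ * ‖P δ‖ := mul_le_mul_of_nonneg_left ih2 (by linarith)
        _ ≤ _ := hP1
    have hbound : ∀ k : ℕ, γ^k * ‖P (x - y)‖ ≤ 2 * ρ := by
      intro k
      have h1 := (main k).2
      have h2 : ‖P (g^[k] x - g^[k] y)‖ ≤ ‖g^[k] x - g^[k] y‖ := hPnorm _
      have h3 : ‖g^[k] x - g^[k] y‖ ≤ 2 * ρ := by
        have hhx := hx k
        have hhy := hy k
        rw [Metric.mem_closedBall] at hhx hhy
        calc ‖g^[k] x - g^[k] y‖ = dist (g^[k] x) (g^[k] y) := (dist_eq_norm _ _).symm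
        _ ≤ dist (g^[k] x) l + dist l (g^[k] y) := dist_triangle _ _ _
        _ ≤ ρ + ρ := add_le_add hhx (by rw [dist_comm]; exact hhy)
        _ = 2 * ρ := by ring
      linarith
    have hP0 : ‖P (x - y)‖ = 0 := by
      by_contra hne
      have hpos : 0 < ‖P (x - y)‖ := lt_of_le_of_ne (norm_nonneg _) (Ne.symm hne)
      obtain ⟨k, hk⟩ := pow_unbounded_of_one_lt ((2 * ρ) / ‖P (x - y)‖) hγ1
      have h1 := hbound k
      rw [div_lt_iff₀ hpos] at hk
      linarith
    have hQ0 : ‖Q (x - y)‖ = 0 := le_antisymm (hP0 ▸ hQP) (norm_nonneg _)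
    have hz : x - y = 0 := by
      have h1 := hPQ (x - y)
      rw [norm_eq_zero] at hP0 hQ0
      rw [← h1, hP0, hQ0, add_zero]
    exact sub_eq_zero.mp hz
  -- conclude via Fubini along an expanding direction
  obtain ⟨i₀, hi₀⟩ := hUne
  have mp := b.measurePreserving_repr
  set S' := ⇑b.repr '' S with hS'def
  have hpre : S' = ⇑b.repr.symm ⁻¹' S :=
    congrFun (Set.image_eq_preimage_of_inverse (fun z => b.repr.symm_apply_apply z)
      (fun z => b.repr.apply_symm_apply z)) S
  have hS'm : MeasurableSet S' := by
    rw [hpre]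
    exact hSm.preimage b.repr.symm.continuous.measurable
  have hvol : volume S = volume S' := by
    have h1 := mp.measure_preimage hS'm.nullMeasurableSet
    rw [hS'def, Set.preimage_image_eq S b.repr.injective] at h1
    rw [hS'def]
    exact h1
  rw [hvol]
  apply euclidean_null_of_unique_coord i₀ S' hS'm
  rintro ξ ⟨x, hx, rfl⟩ η ⟨y, hy, rfl⟩ hcoords
  have hc : ∀ j, j ≠ i₀ → ⟪b j, x - y⟫ = 0 := by
    intro j hj
    have h1 := hcoords j hj
    rw [OrthonormalBasis.repr_apply_apply, OrthonormalBasis.repr_apply_apply] at h1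
    rw [inner_sub_right, h1, sub_self]
  have hQz : Q (x - y) = 0 := by
    apply hext _ 0
    intro j
    rw [hQco, inner_zero_right]
    rcases Finset.decidableMem j U with h | h
    · simp only [if_neg h]
      exact hc j (fun hji => h (hji ▸ hi₀))
    · simp [h]
  have hxy : x = y := by
    apply key x hx y hy
    rw [hQz, norm_zero]
    exact norm_nonneg _
  rw [hxy]

set_option maxHeartbeats 2000000 in
/-- If `C` is an at most countable set of critical points of `f`, each a strict
saddle, then the set of initializations from which gradient descent (with step
size `0 < α < 1/L`) converges to a point of `C` has Lebesgue measure zero. -/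
theorem gradient_descent_avoids_countable_strict_saddles
    {d : ℕ} (f : EuclideanSpace ℝ (Fin d) → ℝ) (L α : ℝ)
    (hf : ContDiff ℝ 2 f) (hL : 0 < L)
    (hlip : ∀ x y, ‖gradient f x - gradient f y‖ ≤ L * ‖x - y‖)
    (hα : 0 < α) (hαL : α < 1 / L)
    (g : EuclideanSpace ℝ (Fin d) → EuclideanSpace ℝ (Fin d))
    (hg : ∀ x, g x = x - α • gradient f x)
    (C : Set (EuclideanSpace ℝ (Fin d))) (hcount : C.Countable)
    (hcrit : ∀ x ∈ C, gradient f x = 0)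
    (hsaddle : ∀ x ∈ C, ∃ v, (inner ℝ v (fderiv ℝ (gradient f) x v) : ℝ) < 0) :
    volume {x₀ | ∃ l ∈ C, Tendsto (fun k => g^[k] x₀) atTop (nhds l)} = 0 := by
  classical
  have hαL1 : α * L < 1 := by
    calc α * L < (1 / L) * L := mul_lt_mul_of_pos_right hαL hL
    _ = 1 := by field_simp
  -- gradient is C¹
  have hgradfun : gradient f = fun x => (InnerProductSpace.toDual ℝ _).symm (fderiv ℝ f x) := rfl
  have hf' : ContDiff ℝ 1 (fderiv ℝ f) := by
    apply hf.fderiv_right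
    norm_num
  have hgradCD : ContDiff ℝ 1 (gradient f) := by
    rw [hgradfun]
    exact (InnerProductSpace.toDual ℝ _).symm.toContinuousLinearEquiv.contDiff.comp hf'
  have hgradD : Differentiable ℝ (gradient f) := hgradCD.differentiable one_ne_zero
  have hgfun : g = fun x => x - α • gradient f x := funext hg
  have hgCD : ContDiff ℝ 1 g := by
    rw [hgfun]
    exact contDiff_id.sub (hgradCD.const_smul α)
  have hgc : Continuous g := hgCD.continuous
  -- Lipschitz bound on the Hessian
  have hlipW : LipschitzWith (Real.toNNReal L) (gradient f) := by
    apply LipschitzWith.of_dist_le_mul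
    intro x y
    rw [dist_eq_norm, dist_eq_norm, Real.coe_toNNReal L hL.le]
    exact hlip x y
  have hHle : ∀ x, ‖fderiv ℝ (gradient f) x‖ ≤ L := by
    intro x
    have := norm_fderiv_le_of_lipschitz ℝ hlipW (x₀ := x)
    rwa [Real.coe_toNNReal L hL.le] at this
  -- derivative of g
  have hDg : ∀ x, HasFDerivAt g
      (ContinuousLinearMap.id ℝ _ - α • fderiv ℝ (gradient f) x) x := by
    intro x
    rw [hgfun]
    exact (hasFDerivAt_id x).sub (((hgradD x).hasFDerivAt).const_smul α)
  have hdet : ∀ x, (fderiv ℝ g x).det ≠ 0 := by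
    intro x
    have hnrm : ‖α • fderiv ℝ (gradient f) x‖ < 1 := by
      rw [norm_smul, Real.norm_eq_abs, abs_of_pos hα]
      calc α * ‖fderiv ℝ (gradient f) x‖ ≤ α * L :=
            mul_le_mul_of_nonneg_left (hHle x) hα.le
      _ < 1 := hαL1
    set u := Units.oneSub (α • fderiv ℝ (gradient f) x) hnrm with hu
    have hval : fderiv ℝ g x = u.val := by
      rw [(hDg x).fderiv]
      rfl
    have hmul : (u.val).det * (u.inv).det = 1 := by
      have h1 : u.val * u.inv = 1 := u.val_inv
      have h2 := congrArg (fun T : EuclideanSpace ℝ (Fin d) →L[ℝ] EuclideanSpace ℝ (Fin d) =>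
        T.det) h1
      simp only [ContinuousLinearMap.det] at h2
      rw [ContinuousLinearMap.mul_def, ContinuousLinearMap.toLinearMap_comp, LinearMap.det_comp] at h2
      rw [ContinuousLinearMap.one_def, ContinuousLinearMap.coe_id, LinearMap.det_id] at h2
      exact h2
    rw [hval]
    exact left_ne_zero_of_mul_eq_one hmul
  -- g is injective
  have hginj : Function.Injective g := by
    intro x y hxy
    rw [hg x, hg y] at hxy
    have h2 : x - y = α • gradient f x - α • gradient f y :=
      sub_eq_sub_iff_sub_eq_sub.mp hxy
    have h3 : ‖x - y‖ ≤ α * L * ‖x - y‖ := by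
      calc ‖x - y‖ = ‖α • gradient f x - α • gradient f y‖ := by rw [h2]
      _ = ‖α • (gradient f x - gradient f y)‖ := by rw [smul_sub]
      _ = α * ‖gradient f x - gradient f y‖ := by
            rw [norm_smul, Real.norm_eq_abs, abs_of_pos hα]
      _ ≤ α * (L * ‖x - y‖) := mul_le_mul_of_nonneg_left (hlip x y) hα.le
      _ = α * L * ‖x - y‖ := by ring
    have h4 : ‖x - y‖ = 0 := by nlinarith [norm_nonneg (x - y)]
    rw [norm_eq_zero, sub_eq_zero] at h4
    exact h4
  -- iterated preimages of null sets are null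
  have hiter : ∀ (K : ℕ) (N : Set (EuclideanSpace ℝ (Fin d))), volume N = 0 →
      volume (g^[K] ⁻¹' N) = 0 := by
    intro K
    induction K with
    | zero => intro N hN; simpa using hN
    | succ K ih =>
      intro N hN
      rw [Function.iterate_succ, Set.preimage_comp]
      exact preimage_null_of_det_ne_zero g hgCD hginj hdet (ih N hN)
  -- split over the countable set C
  have hset : {x₀ | ∃ l ∈ C, Tendsto (fun k => g^[k] x₀) atTop (nhds l)}
      = ⋃ l ∈ C, {x₀ | Tendsto (fun k => g^[k] x₀) atTop (nhds l)} := by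
    ext x; simp
  rw [hset, measure_biUnion_null_iff hcount]
  intro l hl
  -- the Hessian of f at l, as the derivative of the gradient
  set H := fderiv ℝ (gradient f) l with hH
  have hfd : ∀ y, HasFDerivAt f (fderiv ℝ f y) y :=
    fun y => (hf.differentiable (by norm_num) y).hasFDerivAt
  have hf'd : HasFDerivAt (fderiv ℝ f) (fderiv ℝ (fderiv ℝ f) l) l :=
    ((hf'.differentiable one_ne_zero) l).hasFDerivAt
  have hsym2 := second_derivative_symmetric hfd hf'd
  set e := (InnerProductSpace.toDual ℝ (EuclideanSpace ℝ (Fin d))).symm with he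
  have hgradD' : HasFDerivAt (gradient f)
      ((e.toContinuousLinearEquiv.toContinuousLinearMap).comp (fderiv ℝ (fderiv ℝ f) l)) l := by
    have hc := (e.toContinuousLinearEquiv.toContinuousLinearMap.hasFDerivAt
      (x := fderiv ℝ f l)).comp l hf'd
    rw [hgradfun]
    exact hc
  have hHval : H = (e.toContinuousLinearEquiv.toContinuousLinearMap).comp
      (fderiv ℝ (fderiv ℝ f) l) := by
    rw [hH]
    exact hgradD'.fderiv
  have hHapp : ∀ u v, ⟪H u, v⟫ = fderiv ℝ (fderiv ℝ f) l u v := by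
    intro u v
    rw [hHval]
    rw [ContinuousLinearMap.coe_comp', Function.comp_apply]
    rw [ContinuousLinearEquiv.coe_coe, LinearIsometryEquiv.coe_toContinuousLinearEquiv]
    exact InnerProductSpace.toDual_symm_apply
  have hHsym : ∀ u v, ⟪H u, v⟫ = ⟪u, H v⟫ := by
    intro u v
    rw [hHapp u v, hsym2 u v, ← hHapp v u, real_inner_comm]
  set A : EuclideanSpace ℝ (Fin d) →L[ℝ] EuclideanSpace ℝ (Fin d) :=
    ContinuousLinearMap.id ℝ _ - α • H with hA
  have hAapp : ∀ v, A v = v - α • H v := by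
    intro v
    rw [hA]
    simp
  have hAinner : ∀ v, ⟪v, A v⟫ = ‖v‖ ^ 2 - α * ⟪v, H v⟫ := by
    intro v
    rw [hAapp, inner_sub_right, real_inner_smul_right, real_inner_self_eq_norm_sq]
  have hAsym : ∀ u v, ⟪A u, v⟫ = ⟪u, A v⟫ := by
    intro u v
    rw [hAapp, hAapp, inner_sub_left, inner_sub_right, real_inner_smul_left,
      real_inner_smul_right, hHsym]
  have hexpA : ∃ v, ‖v‖ ^ 2 < ⟪v, A v⟫ := by
    obtain ⟨v, hv⟩ := hsaddle l hl
    refine ⟨v, ?_⟩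
    rw [hAinner]
    have hv' : (⟪v, H v⟫ : ℝ) < 0 := hv
    nlinarith
  have hlowA : ∀ v, -(‖v‖ ^ 2) ≤ ⟪v, A v⟫ := by
    intro v
    rw [hAinner]
    have h1 : (⟪v, H v⟫ : ℝ) ≤ ‖v‖ * ‖H v‖ := real_inner_le_norm v (H v)
    have h2 : ‖H v‖ ≤ ‖H‖ * ‖v‖ := H.le_opNorm v
    have h3 : ‖H‖ ≤ L := hHle l
    have h4 : (0:ℝ) ≤ ‖v‖ := norm_nonneg v
    have h5 : (0:ℝ) ≤ ‖H‖ := norm_nonneg _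
    have h6 : (⟪v, H v⟫ : ℝ) ≤ L * ‖v‖ ^ 2 := by nlinarith
    have h7 : α * (⟪v, H v⟫ : ℝ) ≤ α * (L * ‖v‖ ^ 2) := mul_le_mul_of_nonneg_left h6 hα.le
    have h8 : α * (L * ‖v‖ ^ 2) ≤ ‖v‖ ^ 2 := by nlinarith [sq_nonneg ‖v‖]
    have h9 : (0:ℝ) ≤ ‖v‖ ^ 2 := sq_nonneg _
    linarith
  obtain ⟨ε, hε, hstab⟩ := stable_set_null A hAsym hexpA hlowA
  -- choose a ball on which g is ε-close to its linearization at l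
  have hfdg : Continuous (fderiv ℝ g) := hgCD.continuous_fderiv one_ne_zero
  have hDgl : fderiv ℝ g l = A := (hDg l).fderiv
  have hnb : {z | fderiv ℝ g z ∈ Metric.ball A ε} ∈ nhds l := by
    apply hfdg.continuousAt.preimage_mem_nhds
    rw [hDgl]
    exact Metric.ball_mem_nhds _ hε
  obtain ⟨ρ', hsub, hρ'open, hρ'mem⟩ := mem_nhds_iff.mp hnb
  obtain ⟨ρ2, hρ2pos, hball2⟩ := Metric.isOpen_iff.mp hρ'open l hρ'mem
  set ρ : ℝ := ρ2 / 2 with hρdef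
  have hρ : 0 < ρ := by positivity
  have hballd : ∀ z ∈ Metric.closedBall l ρ, ‖fderiv ℝ g z - A‖ ≤ ε := by
    intro z hz
    have h1 : z ∈ Metric.ball l ρ2 :=
      Metric.closedBall_subset_ball (by linarith) hz
    have h2 := hsub (hball2 h1)
    rw [Set.mem_setOf_eq, Metric.mem_ball, dist_eq_norm] at h2
    exact h2.le
  have hb : ∀ x ∈ Metric.closedBall l ρ, ∀ y ∈ Metric.closedBall l ρ,
      ‖g x - g y - A (x - y)‖ ≤ ε * ‖x - y‖ := by
    intro x hx y hy
    set φ := fun z : EuclideanSpace ℝ (Fin d) => g z - A z with hφ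
    have hφd : ∀ z ∈ Metric.closedBall l ρ, DifferentiableAt ℝ φ z := fun z _ =>
      ((hgCD.differentiable one_ne_zero) z).sub (A.differentiableAt)
    have hφf : ∀ z, fderiv ℝ φ z = fderiv ℝ g z - A := fun z =>
      (((hgCD.differentiable one_ne_zero z).hasFDerivAt).sub A.hasFDerivAt).fderiv
    have hbound : ∀ z ∈ Metric.closedBall l ρ, ‖fderiv ℝ φ z‖ ≤ ε := by
      intro z hz
      rw [hφf]
      exact hballd z hz
    have hmv := (convex_closedBall l ρ).norm_image_sub_le_of_norm_fderiv_le hφd hbound hy hx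
    have hid : φ x - φ y = g x - g y - A (x - y) := by
      rw [hφ]
      simp only [map_sub]
      abel
    rwa [hid] at hmv
  have hSnull := hstab g hgc l ρ hρ hb
  apply measure_mono_null _ (measure_iUnion_null
    (fun K : ℕ => hiter K _ hSnull))
  intro x hx
  simp only [Set.mem_setOf_eq] at hx
  have hev : ∀ᶠ k in atTop, g^[k] x ∈ Metric.closedBall l ρ :=
    hx.eventually_mem (Metric.closedBall_mem_nhds l hρ)
  obtain ⟨K, hK⟩ := eventually_atTop.mp hev
  apply Set.mem_iUnion.mpr ⟨K, ?_⟩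
  simp only [Set.mem_preimage, Set.mem_setOf_eq]
  intro j
  rw [← Function.iterate_add_apply]
  exact hK (j + K) (Nat.le_add_left K j)
end

section
/- Let f : ℝ^d → ℝ be twice continuously differentiable with L-Lipschitz gradient, let 0 < α < 1/L, and let g(x) = x − α∇f(x). Suppose every critical point of f is either a local minimizer or a strict saddle, and that the set of strict saddle points is at most countable. Then the set {x₀ : the iterates g^k(x₀) converge to some limit x̄ and x̄ is not a local minimizer of f} has Lebesgue measure zero. In particular, for almost every initial point from which the gradient iterates converge, the limit is a local minimizer. -/
open MeasureTheory Filter Function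
open scoped NNReal ENNReal

noncomputable section

variable {d : ℕ}

local notation "Ed" => EuclideanSpace ℝ (Fin d)

-- real inner product notation
local notation "⟪" x ", " y "⟫" => @inner ℝ _ _ x y

private lemma image_null_of_lipschitzOnWith {A : Set Ed}
    {K : ℝ≥0} {F : Ed → Ed}
    (hF : LipschitzOnWith K F A) (hA : volume A = 0) : volume (F '' A) = 0 := by
  have hfr : Module.finrank ℝ Ed = d := finrank_euclideanSpace_fin
  haveI hHaar : (μH[(d : ℝ)] : Measure Ed).IsAddHaarMeasure := by
    have h := isAddHaarMeasure_hausdorffMeasure (E := EuclideanSpace ℝ (Fin d))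
    rwa [hfr] at h
  have h1 : (volume : Measure Ed) =
      Measure.addHaarScalarFactor volume μH[(d:ℝ)] • μH[(d:ℝ)] :=
    Measure.isAddLeftInvariant_eq_smul _ _
  have h2 : (μH[(d:ℝ)] : Measure Ed) =
      Measure.addHaarScalarFactor μH[(d:ℝ)] volume • volume :=
    Measure.isAddLeftInvariant_eq_smul _ _
  have hμA : μH[(d:ℝ)] A = 0 := by
    conv_lhs => rw [h2]
    simp [hA]
  have him := hF.hausdorffMeasure_image_le (d := (d:ℝ)) (by positivity)
  rw [hμA, mul_zero] at him
  have h0 : μH[(d:ℝ)] (F '' A) = 0 := le_antisymm him zero_le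
  conv_lhs => rw [h1]
  simp [h0]

private lemma preimage_null_of_antilipschitz {K : ℝ≥0}
    {G : Ed → Ed}
    (hG : AntilipschitzWith K G) {S : Set Ed}
    (hS : volume S = 0) : volume (G ⁻¹' S) = 0 := by
  have hsub : G ⁻¹' S ⊆ invFun G '' (S ∩ Set.range G) := by
    intro x hx
    exact ⟨G x, ⟨hx, ⟨x, rfl⟩⟩, leftInverse_invFun hG.injective x⟩
  have hlip : LipschitzOnWith K (invFun G) (S ∩ Set.range G) := by
    apply LipschitzOnWith.of_dist_le_mul
    intro y hy y' hy'
    have e1 : G (invFun G y) = y := invFun_eq hy.2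
    have e2 : G (invFun G y') = y' := invFun_eq hy'.2
    calc dist (invFun G y) (invFun G y')
        ≤ K * dist (G (invFun G y)) (G (invFun G y')) := hG.le_mul_dist _ _
      _ = K * dist y y' := by rw [e1, e2]
  exact measure_mono_null hsub
    (image_null_of_lipschitzOnWith hlip (measure_mono_null Set.inter_subset_left hS))

set_option maxHeartbeats 2000000 in
private lemma basin_null (f : Ed → ℝ) (L α : ℝ)
    (hf : ContDiff ℝ 2 f) (hL : 0 < L)
    (hlip : ∀ x y, ‖gradient f x - gradient f y‖ ≤ L * ‖x - y‖)
    (hα : 0 < α) (hαL : α < 1 / L)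
    (g : Ed → Ed)
    (hg : ∀ x, g x = x - α • gradient f x)
    (p : Ed) (v : Ed)
    (hv : (inner ℝ v (fderiv ℝ (gradient f) p v) : ℝ) < 0) :
    volume {x₀ : Ed | Tendsto (fun k => g^[k] x₀) atTop (nhds p)} = 0 := by
  classical
  have hαL1 : α * L < 1 := (lt_div_iff₀ hL).mp hαL
  -- gradient f is C¹ and Lipschitz
  have hL' : LipschitzWith L.toNNReal (gradient f) := by
    apply LipschitzWith.of_dist_le_mul
    intro x y
    rw [dist_eq_norm, dist_eq_norm, Real.coe_toNNReal _ hL.le]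
    exact hlip x y
  have hgrad1 : ContDiff ℝ 1 (gradient f) := by
    have h1 : ContDiff ℝ 1 (fderiv ℝ f) := hf.fderiv_right (by norm_num)
    have h2 : gradient f = fun x =>
        (InnerProductSpace.toDual ℝ Ed).symm (fderiv ℝ f x) := rfl
    rw [h2]
    exact ((InnerProductSpace.toDual ℝ Ed).symm.contDiff).comp h1
  have gdiff : Differentiable ℝ (gradient f) := hgrad1.differentiable (by norm_num)
  set D : Ed → (Ed →L[ℝ] Ed) := fun x => fderiv ℝ (gradient f) x with hD
  set B : Ed →L[ℝ] Ed := D p with hBdef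
  have hDcont : Continuous D := hgrad1.continuous_fderiv (by norm_num)
  have hBnorm : ‖B‖ ≤ L := by
    have := norm_fderiv_le_of_lipschitz ℝ hL' (x₀ := p)
    rwa [Real.coe_toNNReal _ hL.le] at this
  -- symmetry of B
  have hsymm : ∀ u w : Ed, ⟪B u, w⟫ = ⟪u, B w⟫ := by
    have hfd : DifferentiableAt ℝ (fderiv ℝ f) p :=
      ((hf.fderiv_right (m := 1) (by norm_num)).differentiable (by norm_num)) p
    have hsnd : IsSymmSndFDerivAt ℝ f p := hf.contDiffAt.isSymmSndFDerivAt (by simp [minSmoothness_of_isRCLikeNormedField])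
    have key : ∀ w u : Ed, ⟪w, B u⟫ = fderiv ℝ (fderiv ℝ f) p u w := by
      intro w u
      have h1 : HasFDerivAt (fun x => (innerSL ℝ w) (gradient f x))
          ((innerSL ℝ w).comp B) p := (innerSL ℝ w).hasFDerivAt.comp p ((gdiff p).hasFDerivAt)
      have h2 : HasFDerivAt (fun x => (fderiv ℝ f x) w)
          ((ContinuousLinearMap.apply ℝ ℝ w).comp (fderiv ℝ (fderiv ℝ f) p)) p :=
        (ContinuousLinearMap.apply ℝ ℝ w).hasFDerivAt.comp p hfd.hasFDerivAt
      have heq : (fun x => (innerSL ℝ w) (gradient f x)) = fun x => (fderiv ℝ f x) w := by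
        funext x
        have h3 : ⟪gradient f x, w⟫ = (fderiv ℝ f x) w :=
          InnerProductSpace.toDual_symm_apply
        have h4 : (innerSL ℝ w) (gradient f x) = ⟪w, gradient f x⟫ := rfl
        rw [h4, real_inner_comm]
        exact h3
      rw [heq] at h1
      have h5 := h1.unique h2
      have h6 : ((innerSL ℝ w).comp B) u
          = ((ContinuousLinearMap.apply ℝ ℝ w).comp (fderiv ℝ (fderiv ℝ f) p)) u := by rw [h5]
      exact h6
    intro u w
    have e1 : ⟪B u, w⟫ = ⟪w, B u⟫ := real_inner_comm _ _
    rw [e1, key w u, key u w]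
    exact hsnd.eq u w
  -- spectral decomposition
  have hTsym : (B : Ed →ₗ[ℝ] Ed).IsSymmetric := fun u w => hsymm u w
  set b := hTsym.eigenvectorBasis finrank_euclideanSpace_fin with hbdef
  set μs := hTsym.eigenvalues finrank_euclideanSpace_fin with hμdef
  have hb : ∀ i, B (b i) = μs i • b i := by
    intro i
    exact hTsym.apply_eigenvectorBasis finrank_euclideanSpace_fin i
  have hcoord : ∀ (i : Fin d) (z : Ed), ⟪b i, B z⟫ = μs i * ⟪b i, z⟫ := by
    intro i z
    rw [← hsymm (b i) z, hb i, real_inner_smul_left]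
  have hμL : ∀ i, μs i ≤ L := by
    intro i
    have hbi : ‖b i‖ = 1 := b.orthonormal.1 i
    have h1 : μs i = ⟪b i, B (b i)⟫ := by
      rw [hb i, real_inner_smul_right, real_inner_self_eq_norm_sq, hbi]
      ring
    have h2 : ⟪b i, B (b i)⟫ ≤ ‖b i‖ * ‖B (b i)‖ := real_inner_le_norm _ _
    have h3 : ‖B (b i)‖ ≤ ‖B‖ * ‖b i‖ := B.le_opNorm _
    rw [hbi, one_mul] at h2
    rw [hbi, mul_one] at h3
    linarith
  -- existence of a negative eigenvalue
  have hneg : ∃ i, μs i < 0 := by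
    by_contra h
    push_neg at h
    have hvB : ⟪v, B v⟫ < 0 := hv
    have hsum : ⟪v, B v⟫ = ∑ i, μs i * (⟪v, b i⟫ * ⟪v, b i⟫) := by
      rw [← b.sum_inner_mul_inner v (B v)]
      congr 1
      funext i
      rw [hcoord i v, real_inner_comm (b i) v]
      ring
    have : (0:ℝ) ≤ ⟪v, B v⟫ := by
      rw [hsum]
      apply Finset.sum_nonneg
      intro i _
      have := mul_self_nonneg (⟪v, b i⟫ : ℝ)
      nlinarith [h i]
    linarith
  obtain ⟨i0, hi0⟩ := hneg
  -- constants
  set ν : Fin d → ℝ := fun i => 1 - α * μs i with hνdef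
  have hνpos : ∀ i, 0 < ν i := by
    intro i
    have h1 : α * μs i ≤ α * L := mul_le_mul_of_nonneg_left (hμL i) hα.le
    simp only [hνdef]
    linarith
  have huniv : (Finset.univ : Finset (Fin d)).Nonempty := ⟨i0, Finset.mem_univ i0⟩
  set a : ℝ := Finset.univ.sup' huniv ν with hadef
  have ha_ge : ∀ i, ν i ≤ a := fun i => Finset.le_sup' ν (Finset.mem_univ i)
  have ha1 : 1 < a := by
    have h1 : 1 < ν i0 := by
      simp only [hνdef]
      nlinarith
    linarith [ha_ge i0]
  obtain ⟨ip, -, hip⟩ := Finset.exists_mem_eq_sup' huniv ν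
  set θ : ℝ := Finset.univ.sup' huniv (fun i => if ν i = a then 0 else ν i) with hθdef
  have hθa : θ < a := by
    rw [hθdef, Finset.sup'_lt_iff]
    intro i _
    by_cases hi : ν i = a
    · rw [if_pos hi]
      linarith
    · rw [if_neg hi]
      exact lt_of_le_of_ne (ha_ge i) hi
  have hθ0 : 0 ≤ θ := by
    have h1 := Finset.le_sup' (fun i => if ν i = a then (0:ℝ) else ν i) (Finset.mem_univ ip)
    rw [if_pos hip.symm] at h1
    exact h1
  have hθle : ∀ i, ν i ≠ a → ν i ≤ θ := by
    intro i hi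
    have h1 := Finset.le_sup' (fun i => if ν i = a then (0:ℝ) else ν i) (Finset.mem_univ i)
    rwa [if_neg hi] at h1
  set η : ℝ := min ((a - 1)/4) ((a - θ)/4) with hηdef
  have hη0 : 0 < η := by
    apply lt_min <;> [linarith; linarith]
  have hηa : η ≤ (a-1)/4 := min_le_left _ _
  have hηθ : η ≤ (a-θ)/4 := min_le_right _ _
  set ρ : ℝ := (a + 1)/2 with hρdef
  have hρ1 : 1 < ρ := by rw [hρdef]; linarith
  have hρa : ρ ≤ a - 2*η := by rw [hρdef]; linarith
  have hθη : θ + 2*η ≤ a - 2*η := by linarith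
  -- choose ε by continuity of D at p
  have hDcp : ContinuousAt D p := hDcont.continuousAt
  rw [Metric.continuousAt_iff] at hDcp
  obtain ⟨δ, hδ0, hδ⟩ := hDcp (η/α) (by positivity)
  set ε : ℝ := δ/2 with hεdef
  have hε0 : 0 < ε := by rw [hεdef]; positivity
  have hball : ∀ x ∈ Metric.closedBall p ε, ‖D x - B‖ ≤ η/α := by
    intro x hx
    have h1 : dist x p < δ := lt_of_le_of_lt (Metric.mem_closedBall.mp hx) (by rw [hεdef]; linarith)
    have h2 := (hδ h1).le
    rwa [dist_eq_norm] at h2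
  -- the linear map A and the mean value estimate
  set A : Ed →L[ℝ] Ed := ContinuousLinearMap.id ℝ Ed - α • B with hAdef
  have hgd : ∀ x, HasFDerivAt g (ContinuousLinearMap.id ℝ Ed - α • D x) x := by
    intro x
    have h1 : HasFDerivAt (fun y => y - α • gradient f y)
        (ContinuousLinearMap.id ℝ Ed - α • D x) x :=
      (hasFDerivAt_id x).sub (((gdiff x).hasFDerivAt).const_smul α)
    have h2 : g = fun y => y - α • gradient f y := funext hg
    rw [h2]
    exact h1
  have hmv : ∀ x ∈ Metric.closedBall p ε, ∀ y ∈ Metric.closedBall p ε,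
      ‖(g y - g x) - A (y - x)‖ ≤ η * ‖y - x‖ := by
    intro x hx y hy
    have hder : ∀ z ∈ Metric.closedBall p ε,
        HasFDerivWithinAt (fun t => g t - A t)
          ((ContinuousLinearMap.id ℝ Ed - α • D z) - A) (Metric.closedBall p ε) z := by
      intro z _
      exact ((hgd z).sub A.hasFDerivAt).hasFDerivWithinAt
    have hbound : ∀ z ∈ Metric.closedBall p ε,
        ‖(ContinuousLinearMap.id ℝ Ed - α • D z) - A‖ ≤ η := by
      intro z hz
      have h1 : (ContinuousLinearMap.id ℝ Ed - α • D z) - A = α • (B - D z) := by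
        rw [hAdef, smul_sub]
        abel
      rw [h1]
      have h2 : ‖α • (B - D z)‖ = α * ‖B - D z‖ := by
        rw [norm_smul α (B - D z), Real.norm_eq_abs, abs_of_pos hα]
      rw [h2, norm_sub_rev]
      calc α * ‖D z - B‖ ≤ α * (η/α) := mul_le_mul_of_nonneg_left (hball z hz) hα.le
        _ = η := by field_simp
    have h2 := Convex.norm_image_sub_le_of_norm_hasFDerivWithin_le hder hbound
      (convex_closedBall p ε) hx hy
    have h3 : (fun t => g t - A t) y - (fun t => g t - A t) x = (g y - g x) - A (y - x) := by
      simp only [A.map_sub]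
      abel
    rw [h3] at h2
    exact h2
  -- the two coordinate projections
  set c : Fin d → Ed → ℝ := fun i z => ⟪b i, z⟫ with hcdef
  set P : Ed → EuclideanSpace ℝ (Fin d) := fun z => WithLp.toLp 2 (fun i => if ν i = a then c i z else 0) with hPdef
  set Q : Ed → EuclideanSpace ℝ (Fin d) := fun z => WithLp.toLp 2 (fun i => if ν i = a then 0 else c i z) with hQdef
  have hPapp : ∀ z i, P z i = if ν i = a then c i z else 0 := fun z i => rfl
  have hQapp : ∀ z i, Q z i = if ν i = a then 0 else c i z := fun z i => rfl
  have hPadd : ∀ y z, P (y + z) = P y + P z := by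
    intro y z
    ext i
    rw [PiLp.add_apply, hPapp, hPapp, hPapp]
    by_cases hi : ν i = a <;> simp [hi, hcdef, inner_add_right, mul_add, mul_sub, Finset.sum_add_distrib, Finset.sum_sub_distrib]
  have hQadd : ∀ y z, Q (y + z) = Q y + Q z := by
    intro y z
    ext i
    rw [PiLp.add_apply, hQapp, hQapp, hQapp]
    by_cases hi : ν i = a <;> simp [hi, hcdef, inner_add_right, mul_add, mul_sub, Finset.sum_add_distrib, Finset.sum_sub_distrib]
  have hQsub : ∀ y z, Q (y - z) = Q y - Q z := by
    intro y z
    ext i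
    rw [PiLp.sub_apply, hQapp, hQapp, hQapp]
    by_cases hi : ν i = a <;> simp [hi, hcdef, inner_sub_right, mul_add, mul_sub, Finset.sum_add_distrib, Finset.sum_sub_distrib]
  have hnorm_sq : ∀ y : EuclideanSpace ℝ (Fin d), ‖y‖^2 = ∑ i, (y i)^2 := by
    intro y
    rw [EuclideanSpace.norm_eq]
    rw [Real.sq_sqrt (by positivity)]
    congr 1
    funext i
    rw [Real.norm_eq_abs, sq_abs]
  have hparseval : ∀ z : Ed, ‖z‖^2 = ∑ i, (c i z)^2 := by
    intro z
    rw [← b.repr.norm_map z, hnorm_sq]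
    congr 1
    funext i
    rw [b.repr_apply_apply]
  have hsplit : ∀ z : Ed, ‖z‖^2 = ‖P z‖^2 + ‖Q z‖^2 := by
    intro z
    rw [hparseval z, hnorm_sq (P z), hnorm_sq (Q z), ← Finset.sum_add_distrib]
    congr 1
    funext i
    rw [hPapp, hQapp]
    by_cases hi : ν i = a <;> simp [hi]
  have hPle : ∀ z : Ed, ‖P z‖ ≤ ‖z‖ := by
    intro z
    nlinarith [hsplit z, norm_nonneg (P z), norm_nonneg z, norm_nonneg (Q z), sq_nonneg (‖Q z‖)]
  have hQle : ∀ z : Ed, ‖Q z‖ ≤ ‖z‖ := by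
    intro z
    nlinarith [hsplit z, norm_nonneg (P z), norm_nonneg z, norm_nonneg (Q z), sq_nonneg (‖P z‖)]
  have hle2 : ∀ z : Ed, ‖z‖ ≤ ‖P z‖ + ‖Q z‖ := by
    intro z
    nlinarith [hsplit z, norm_nonneg (P z), norm_nonneg z, norm_nonneg (Q z),
      mul_nonneg (norm_nonneg (P z)) (norm_nonneg (Q z))]
  have hcoordA : ∀ (i : Fin d) (z : Ed), ⟪b i, A z⟫ = ν i * ⟪b i, z⟫ := by
    intro i z
    have h1 : A z = z - α • B z := by
      rw [hAdef]
      simp [ContinuousLinearMap.sub_apply]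
    rw [h1, inner_sub_right, real_inner_smul_right, hcoord i z, hνdef]
    ring
  have hPA : ∀ z : Ed, P (A z) = a • P z := by
    intro z
    ext i
    rw [PiLp.smul_apply, hPapp, hPapp]
    by_cases hi : ν i = a
    · rw [if_pos hi, if_pos hi, smul_eq_mul]
      have := hcoordA i z
      rw [hcdef]
      simp only []
      rw [show (⟪b i, A z⟫ : ℝ) = ν i * ⟪b i, z⟫ from this, hi]
    · rw [if_neg hi, if_neg hi, smul_eq_mul, mul_zero]
  have hQA : ∀ z : Ed, ‖Q (A z)‖ ≤ θ * ‖Q z‖ := by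
    intro z
    have h1 : ‖Q (A z)‖^2 ≤ (θ * ‖Q z‖)^2 := by
      rw [hnorm_sq (Q (A z)), mul_pow, hnorm_sq (Q z), Finset.mul_sum]
      apply Finset.sum_le_sum
      intro i _
      rw [hQapp, hQapp]
      by_cases hi : ν i = a
      · rw [if_pos hi, if_pos hi]
        norm_num
      · rw [if_neg hi, if_neg hi]
        have h2 : c i (A z) = ν i * c i z := hcoordA i z
        rw [h2]
        have h3 : 0 ≤ ν i := (hνpos i).le
        have h4 : ν i ≤ θ := hθle i hi
        have h5 : ν i ^ 2 ≤ θ ^ 2 := by nlinarith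
        calc (ν i * c i z)^2 = ν i^2 * (c i z)^2 := by ring
          _ ≤ θ^2 * (c i z)^2 := mul_le_mul_of_nonneg_right h5 (sq_nonneg _)
    have h5 : 0 ≤ θ * ‖Q z‖ := mul_nonneg hθ0 (norm_nonneg _)
    nlinarith [norm_nonneg (Q (A z))]
  -- the invariant set
  set Sset : Set Ed := {y | ∀ k : ℕ, g^[k] y ∈ Metric.closedBall p ε} with hSdef
  have hgraph : ∀ x ∈ Sset, ∀ x' ∈ Sset, ‖P (x - x')‖ ≤ ‖Q (x - x')‖ := by
    intro x hx x' hx'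
    by_contra hcon
    push_neg at hcon
    set z : ℕ → Ed := fun k => g^[k] x - g^[k] x' with hzdef
    have hznorm : ∀ k, ‖z k‖ ≤ 2 * ε := by
      intro k
      have h1 := Metric.mem_closedBall.mp (hx k)
      have h2 := Metric.mem_closedBall.mp (hx' k)
      have h3 : dist (g^[k] x) (g^[k] x') ≤ dist (g^[k] x) p + dist p (g^[k] x') :=
        dist_triangle _ _ _
      rw [dist_comm p _] at h3
      have h4 : ‖z k‖ = dist (g^[k] x) (g^[k] x') := by rw [hzdef, dist_eq_norm]
      rw [h4]
      linarith
    have hstep : ∀ k, ‖Q (z k)‖ ≤ ‖P (z k)‖ →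
        (a - 2*η) * ‖P (z k)‖ ≤ ‖P (z (k+1))‖ ∧ ‖Q (z (k+1))‖ ≤ ‖P (z (k+1))‖ := by
      intro k hk
      have hz1 : z (k+1) = g (g^[k] x) - g (g^[k] x') := by
        rw [hzdef]
        simp only [iterate_succ_apply']
      set R : Ed := z (k+1) - A (z k) with hRdef
      have hR : ‖R‖ ≤ η * ‖z k‖ := by
        rw [hRdef, hz1]
        have h1 : z k = g^[k] x - g^[k] x' := rfl
        rw [h1]
        exact hmv _ (hx' k) _ (hx k)
      have hzk1 : z (k+1) = A (z k) + R := by rw [hRdef]; abel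
      have hzb : ‖z k‖ ≤ 2 * ‖P (z k)‖ := by
        have := hle2 (z k)
        linarith
      have hRb : ‖R‖ ≤ 2 * η * ‖P (z k)‖ := by
        calc ‖R‖ ≤ η * ‖z k‖ := hR
          _ ≤ η * (2 * ‖P (z k)‖) := mul_le_mul_of_nonneg_left hzb hη0.le
          _ = 2 * η * ‖P (z k)‖ := by ring
      have hP1 : P (z (k+1)) = a • P (z k) + P R := by rw [hzk1, hPadd, hPA]
      have hP2 : a * ‖P (z k)‖ - ‖R‖ ≤ ‖P (z (k+1))‖ := by
        have h3 := norm_sub_norm_le (a • P (z k)) (-(P R))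
        rw [sub_neg_eq_add, norm_neg] at h3
        have h4 : ‖a • P (z k)‖ = a * ‖P (z k)‖ := by
          rw [norm_smul, Real.norm_eq_abs, abs_of_pos (by linarith : (0:ℝ) < a)]
        have h5 : ‖P R‖ ≤ ‖R‖ := hPle R
        rw [hP1]
        linarith
      have hQ2 : ‖Q (z (k+1))‖ ≤ θ * ‖Q (z k)‖ + ‖R‖ := by
        rw [hzk1, hQadd]
        calc ‖Q (A (z k)) + Q R‖ ≤ ‖Q (A (z k))‖ + ‖Q R‖ := norm_add_le _ _
          _ ≤ θ * ‖Q (z k)‖ + ‖R‖ := add_le_add (hQA _) (hQle R)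
      have hPgrow : (a - 2*η) * ‖P (z k)‖ ≤ ‖P (z (k+1))‖ := by nlinarith
      refine ⟨hPgrow, ?_⟩
      have h6 : θ * ‖Q (z k)‖ ≤ θ * ‖P (z k)‖ := mul_le_mul_of_nonneg_left hk hθ0
      have h7 : ‖Q (z (k+1))‖ ≤ (θ + 2*η) * ‖P (z k)‖ := by nlinarith
      have h8 : (θ + 2*η) * ‖P (z k)‖ ≤ (a - 2*η) * ‖P (z k)‖ :=
        mul_le_mul_of_nonneg_right hθη (norm_nonneg _)
      linarith
    have hind : ∀ k, ‖Q (z k)‖ ≤ ‖P (z k)‖ ∧ ρ^k * ‖P (z 0)‖ ≤ ‖P (z k)‖ := by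
      intro k
      induction k with
      | zero => exact ⟨hcon.le, by simp⟩
      | succ n ih =>
        obtain ⟨ih1, ih2⟩ := ih
        obtain ⟨h1, h2⟩ := hstep n ih1
        refine ⟨h2, ?_⟩
        have h3 : ρ^(n+1) * ‖P (z 0)‖ = ρ * (ρ^n * ‖P (z 0)‖) := by ring
        have h4 : ρ * (ρ^n * ‖P (z 0)‖) ≤ ρ * ‖P (z n)‖ :=
          mul_le_mul_of_nonneg_left ih2 (by linarith)
        have h5 : ρ * ‖P (z n)‖ ≤ (a - 2*η) * ‖P (z n)‖ :=
          mul_le_mul_of_nonneg_right hρa (norm_nonneg _)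
        linarith
    have hP0 : 0 < ‖P (z 0)‖ := lt_of_le_of_lt (norm_nonneg (Q (z 0))) hcon
    obtain ⟨k, hk⟩ := pow_unbounded_of_one_lt ((2*ε)/‖P (z 0)‖) hρ1
    have h6 := (hind k).2
    have h7 : ‖P (z k)‖ ≤ 2*ε := le_trans (hPle (z k)) (hznorm k)
    rw [div_lt_iff₀ hP0] at hk
    linarith
  -- Sset is null
  have hSnull : volume Sset = 0 := by
    have hinj : Set.InjOn Q Sset := by
      intro x hx x' hx' hQeq
      have h0 : Q (x - x') = 0 := by rw [hQsub, hQeq, sub_self]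
      have h1 := hgraph x hx x' hx'
      have h2 := hsplit (x - x')
      rw [h0, norm_zero] at h1 h2
      have h3 : ‖x - x'‖ = 0 := by nlinarith [norm_nonneg (P (x - x')), norm_nonneg (x - x')]
      exact sub_eq_zero.mp (norm_eq_zero.mp h3)
    have himg : volume (Q '' Sset) = 0 := by
      apply measure_mono_null
        (?_ : Q '' Sset ⊆ (LinearMap.ker (EuclideanSpace.projₗ (𝕜 := ℝ) ip) : Set (EuclideanSpace ℝ (Fin d))))
      · apply Measure.addHaar_submodule
        intro htop
        have h1 : EuclideanSpace.single ip (1:ℝ)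
            ∈ LinearMap.ker (EuclideanSpace.projₗ (𝕜 := ℝ) ip) := by
          rw [htop]; trivial
        rw [LinearMap.mem_ker] at h1
        have h2 : EuclideanSpace.projₗ (𝕜 := ℝ) ip (EuclideanSpace.single ip (1:ℝ)) = 1 := by
          simp
        rw [h2] at h1
        exact one_ne_zero h1
      · rintro y ⟨x, _, rfl⟩
        rw [SetLike.mem_coe, LinearMap.mem_ker]
        have h1 : EuclideanSpace.projₗ (𝕜 := ℝ) ip (Q x) = Q x ip := rfl
        rw [h1, hQapp, if_pos hip.symm]
    have hSeq : invFunOn Q Sset '' (Q '' Sset) = Sset := hinj.invFunOn_image (subset_refl _)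
    rw [← hSeq]
    apply image_null_of_lipschitzOnWith (K := 2) ?_ himg
    apply LipschitzOnWith.of_dist_le_mul
    rintro y ⟨x1, hx1, rfl⟩ y' ⟨x2, hx2, rfl⟩
    have m1 : invFunOn Q Sset (Q x1) ∈ Sset := invFunOn_mem ⟨x1, hx1, rfl⟩
    have e1 : Q (invFunOn Q Sset (Q x1)) = Q x1 := invFunOn_eq ⟨x1, hx1, rfl⟩
    have m2 : invFunOn Q Sset (Q x2) ∈ Sset := invFunOn_mem ⟨x2, hx2, rfl⟩
    have e2 : Q (invFunOn Q Sset (Q x2)) = Q x2 := invFunOn_eq ⟨x2, hx2, rfl⟩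
    set w1 := invFunOn Q Sset (Q x1)
    set w2 := invFunOn Q Sset (Q x2)
    have hg12 := hgraph w1 m1 w2 m2
    have hs12 := hsplit (w1 - w2)
    have h1 : ‖w1 - w2‖ ≤ 2 * ‖Q (w1 - w2)‖ := by
      have := hle2 (w1 - w2)
      linarith
    rw [hQsub, e1, e2] at h1
    rw [dist_eq_norm, dist_eq_norm]
    have h2 : ((2:ℝ≥0) : ℝ) = 2 := by norm_num
    rw [h2]
    exact h1
  -- antilipschitz bound for g
  have h1αL : 0 < 1 - α * L := by linarith
  set k0 : ℝ≥0 := Real.toNNReal ((1 - α*L)⁻¹) with hk0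
  have hanti : AntilipschitzWith k0 g := by
    apply AntilipschitzWith.of_le_mul_dist
    intro x y
    have key : (1 - α*L) * dist x y ≤ dist (g x) (g y) := by
      rw [dist_eq_norm, dist_eq_norm, hg x, hg y]
      have e1 : x - α • gradient f x - (y - α • gradient f y)
          = (x - y) - α • (gradient f x - gradient f y) := by
        rw [smul_sub]; abel
      rw [e1]
      have h2 : ‖α • (gradient f x - gradient f y)‖ ≤ α * (L * ‖x - y‖) := by
        rw [norm_smul α (gradient f x - gradient f y), Real.norm_eq_abs, abs_of_pos hα]
        exact mul_le_mul_of_nonneg_left (hlip x y) hα.le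
      have h3 := norm_sub_norm_le (x - y) (α • (gradient f x - gradient f y))
      nlinarith [norm_nonneg (x - y)]
    rw [hk0, Real.coe_toNNReal _ (by positivity)]
    rw [inv_mul_eq_div, le_div_iff₀ h1αL]
    linarith [key]
  have hantiN : ∀ N : ℕ, AntilipschitzWith (k0 ^ N) (g^[N]) := by
    intro N
    induction N with
    | zero =>
      simp only [pow_zero, iterate_zero]
      exact AntilipschitzWith.id
    | succ n ih =>
      rw [iterate_succ']
      have h1 := hanti.comp ih
      have h2 : k0^n * k0 = k0^(n+1) := (pow_succ k0 n).symm
      rwa [h2] at h1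
  -- basin is contained in the union of preimages of Sset
  have hbasin : {x₀ : Ed | Tendsto (fun k => g^[k] x₀) atTop (nhds p)}
      ⊆ ⋃ N : ℕ, (g^[N]) ⁻¹' Sset := by
    intro x₀ hx₀
    have hcb : Metric.closedBall p ε ∈ nhds p := Metric.closedBall_mem_nhds p hε0
    obtain ⟨N, hN⟩ := Filter.mem_atTop_sets.mp (hx₀ hcb)
    refine Set.mem_iUnion.mpr ⟨N, ?_⟩
    intro k
    show g^[k] (g^[N] x₀) ∈ Metric.closedBall p ε
    rw [← iterate_add_apply]
    exact hN (k + N) (Nat.le_add_left N k)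
  apply measure_mono_null hbasin
  rw [measure_iUnion_null_iff]
  intro N
  exact preimage_null_of_antilipschitz (hantiN N) hSnull


end

open MeasureTheory Filter Function in
/-- Suppose every critical point of `f` is a local minimizer or a strict saddle,
and the set of strict saddles is at most countable. Then the set of
initializations from which gradient descent (step size `0 < α < 1/L`) converges
to a limit that is not a local minimizer has Lebesgue measure zero. -/
theorem gradient_descent_converges_to_local_minimizers
    {d : ℕ} (f : EuclideanSpace ℝ (Fin d) → ℝ) (L α : ℝ)
    (hf : ContDiff ℝ 2 f) (hL : 0 < L)
    (hlip : ∀ x y, ‖gradient f x - gradient f y‖ ≤ L * ‖x - y‖)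
    (hα : 0 < α) (hαL : α < 1 / L)
    (g : EuclideanSpace ℝ (Fin d) → EuclideanSpace ℝ (Fin d))
    (hg : ∀ x, g x = x - α • gradient f x)
    (hdichotomy : ∀ x, gradient f x = 0 →
      IsLocalMin f x ∨ ∃ v, (inner ℝ v (fderiv ℝ (gradient f) x v) : ℝ) < 0)
    (hcount : Set.Countable
      {x | gradient f x = 0 ∧ ∃ v, (inner ℝ v (fderiv ℝ (gradient f) x v) : ℝ) < 0}) :
    volume {x₀ | ∃ xbar, Tendsto (fun k => g^[k] x₀) atTop (nhds xbar) ∧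
      ¬ IsLocalMin f xbar} = 0 := by
  classical
  have hgrad1 : ContDiff ℝ 1 (gradient f) := by
    have h1 : ContDiff ℝ 1 (fderiv ℝ f) := hf.fderiv_right (by norm_num)
    have h2 : gradient f = fun x =>
        (InnerProductSpace.toDual ℝ (EuclideanSpace ℝ (Fin d))).symm (fderiv ℝ f x) := rfl
    rw [h2]
    exact ((InnerProductSpace.toDual ℝ (EuclideanSpace ℝ (Fin d))).symm.contDiff).comp h1
  have hcg : Continuous g := by
    have h2 : g = fun x => x - α • gradient f x := funext hg
    rw [h2]
    exact continuous_id.sub ((hgrad1.continuous).const_smul α)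
  have hkey : {x₀ | ∃ xbar, Tendsto (fun k => g^[k] x₀) atTop (nhds xbar) ∧
        ¬ IsLocalMin f xbar}
      ⊆ ⋃ s ∈ {x | gradient f x = 0 ∧
          ∃ v, (inner ℝ v (fderiv ℝ (gradient f) x v) : ℝ) < 0},
          {x₀ | Tendsto (fun k => g^[k] x₀) atTop (nhds s)} := by
    rintro x₀ ⟨xbar, hx, hmin⟩
    have hfix : g xbar = xbar := by
      have h1 : Tendsto (fun k => g^[k+1] x₀) atTop (nhds xbar) :=
        hx.comp (tendsto_add_atTop_nat 1)
      have h2 : Tendsto (fun k => g (g^[k] x₀)) atTop (nhds (g xbar)) :=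
        (hcg.tendsto xbar).comp hx
      have h3 : (fun k => g^[k+1] x₀) = fun k => g (g^[k] x₀) := by
        funext k
        exact iterate_succ_apply' g k x₀
      rw [h3] at h1
      exact tendsto_nhds_unique h2 h1
    have hcrit : gradient f xbar = 0 := by
      have h4 : xbar - α • gradient f xbar = xbar := by rw [← hg xbar, hfix]
      have h5 : α • gradient f xbar = 0 := sub_eq_self.mp h4
      exact (smul_eq_zero.mp h5).resolve_left (ne_of_gt hα)
    rcases hdichotomy xbar hcrit with hminx | hsad
    · exact absurd hminx hmin
    · exact Set.mem_biUnion ⟨hcrit, hsad⟩ hx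
  apply measure_mono_null hkey
  rw [measure_biUnion_null_iff hcount]
  rintro s ⟨-, v, hv⟩
  exact basin_null f L α hf hL hlip hα hαL g hg s v hv
end

section
/- Let f : ℝ^d → ℝ be twice continuously differentiable with L-Lipschitz gradient and let 0 < α < 1/L. Then the gradient map g(x) = x − α∇f(x) is a diffeomorphism of ℝ^d: g is a bijection of ℝ^d onto itself, g is continuously differentiable, and its inverse g⁻¹ is continuously differentiable. -/
open Function

/-- For a `C²` function `f` with `L`-Lipschitz gradient and step size
`0 < α < 1/L`, the gradient map `g(x) = x - α∇f(x)` is a diffeomorphism of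
`ℝ^d`: it is a bijection, continuously differentiable, and its inverse is
continuously differentiable. -/
theorem gradient_map_is_diffeomorphism
    {d : ℕ} (f : EuclideanSpace ℝ (Fin d) → ℝ) (L α : ℝ)
    (hf : ContDiff ℝ 2 f) (hL : 0 < L)
    (hlip : ∀ x y, ‖gradient f x - gradient f y‖ ≤ L * ‖x - y‖)
    (hα : 0 < α) (hαL : α < 1 / L)
    (g : EuclideanSpace ℝ (Fin d) → EuclideanSpace ℝ (Fin d))
    (hg : ∀ x, g x = x - α • gradient f x) :
    Function.Bijective g ∧ ContDiff ℝ 1 g ∧ ContDiff ℝ 1 (Function.invFun g) := by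
  have hαL' : α * L < 1 := by
    rw [lt_div_iff₀ hL] at hαL; exact hαL
  -- gradient is C¹
  have hgrad : ContDiff ℝ 1 (gradient f) := by
    have h1 : ContDiff ℝ 1 (fderiv ℝ f) := hf.fderiv_right (by norm_num)
    have : gradient f = fun x => (InnerProductSpace.toDual ℝ (EuclideanSpace ℝ (Fin d))).symm (fderiv ℝ f x) := rfl
    rw [this]
    exact (InnerProductSpace.toDual ℝ (EuclideanSpace ℝ (Fin d))).symm.toLinearIsometry.contDiff.comp h1
  have hgeq : g = fun x => x - α • gradient f x := funext hg
  have hcg : ContDiff ℝ 1 g := by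
    rw [hgeq]; exact contDiff_id.sub (hgrad.const_smul α)
  -- injectivity
  have hinj : Function.Injective g := by
    intro x y hxy
    rw [hg x, hg y] at hxy
    have h1 : x - y = α • (gradient f x - gradient f y) := by
      rw [smul_sub]; abel_nf; abel_nf at hxy
      linear_combination (norm := module) hxy
    have h2 : ‖x - y‖ ≤ α * L * ‖x - y‖ := by
      calc ‖x - y‖ = ‖α • (gradient f x - gradient f y)‖ := by rw [h1]
        _ = α * ‖gradient f x - gradient f y‖ := by
            rw [norm_smul, Real.norm_eq_abs, abs_of_pos hα]
        _ ≤ α * (L * ‖x - y‖) := by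
            exact mul_le_mul_of_nonneg_left (hlip x y) hα.le
        _ = α * L * ‖x - y‖ := by ring
    have h3 : ‖x - y‖ = 0 := by nlinarith [norm_nonneg (x - y)]
    rwa [norm_eq_zero, sub_eq_zero] at h3
  -- surjectivity via Banach fixed point
  have hαLnn : ((α * L).toNNReal : ℝ) = α * L := Real.coe_toNNReal _ (by positivity)
  have hsurj : Function.Surjective g := by
    intro y
    set h : EuclideanSpace ℝ (Fin d) → EuclideanSpace ℝ (Fin d) := fun x => y + α • gradient f x with hh
    have hcon : ContractingWith (α * L).toNNReal h := by
      constructor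
      · rw [← NNReal.coe_lt_coe, hαLnn]; exact hαL'
      · apply LipschitzWith.of_dist_le_mul
        intro x x'
        rw [dist_eq_norm, dist_eq_norm, hαLnn]
        calc ‖h x - h x'‖ = ‖α • (gradient f x - gradient f x')‖ := by
              rw [hh]; congr 1; simp [smul_sub]
          _ = α * ‖gradient f x - gradient f x'‖ := by
              rw [norm_smul, Real.norm_eq_abs, abs_of_pos hα]
          _ ≤ α * (L * ‖x - x'‖) := mul_le_mul_of_nonneg_left (hlip x x') hα.le
          _ = α * L * ‖x - x'‖ := by ring
    obtain ⟨x, hx⟩ : ∃ x, h x = x := ⟨hcon.fixedPoint h, hcon.fixedPoint_isFixedPt⟩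
    refine ⟨x, ?_⟩
    rw [hh] at hx
    simp only at hx
    rw [hg x, sub_eq_iff_eq_add]
    exact hx.symm
  -- gradient of f is Lipschitz
  have hlipgrad : LipschitzWith L.toNNReal (gradient f) := by
    apply LipschitzWith.of_dist_le_mul
    intro x y
    rw [dist_eq_norm, dist_eq_norm, Real.coe_toNNReal _ hL.le]
    exact hlip x y
  -- inverse is C¹
  have hinv : ContDiff ℝ 1 (Function.invFun g) := by
    rw [contDiff_iff_contDiffAt]
    intro y
    obtain ⟨a, rfl⟩ := hsurj y
    have hdiff : DifferentiableAt ℝ (gradient f) a :=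
      (hgrad.differentiable one_ne_zero) a
    have hgd : HasFDerivAt (gradient f) (fderiv ℝ (gradient f) a) a := hdiff.hasFDerivAt
    have hAnorm : ‖α • fderiv ℝ (gradient f) a‖ < 1 := by
      rw [norm_smul, Real.norm_eq_abs, abs_of_pos hα]
      have hb : ‖fderiv ℝ (gradient f) a‖ ≤ L := by
        have := norm_fderiv_le_of_lipschitz ℝ hlipgrad (x₀ := a)
        rwa [Real.coe_toNNReal _ hL.le] at this
      calc α * ‖fderiv ℝ (gradient f) a‖ ≤ α * L := mul_le_mul_of_nonneg_left hb hα.le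
        _ < 1 := hαL'
    set u : (EuclideanSpace ℝ (Fin d) →L[ℝ] EuclideanSpace ℝ (Fin d))ˣ := Units.oneSub _ hAnorm with hu
    set e : EuclideanSpace ℝ (Fin d) ≃L[ℝ] EuclideanSpace ℝ (Fin d) := ContinuousLinearEquiv.ofUnit u with he
    have hgc : ContDiffAt ℝ 1 g a := hcg.contDiffAt
    have hgf' : HasFDerivAt g (e : EuclideanSpace ℝ (Fin d) →L[ℝ] EuclideanSpace ℝ (Fin d)) a := by
      have h1 : HasFDerivAt g
          (ContinuousLinearMap.id ℝ (EuclideanSpace ℝ (Fin d)) - α • fderiv ℝ (gradient f) a) a := by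
        rw [hgeq]
        exact (hasFDerivAt_id a).sub (hgd.const_smul α)
      convert h1 using 1
      rfl
    have key : ContDiffAt ℝ 1 (hgc.localInverse hgf' one_ne_zero) (g a) :=
      hgc.to_localInverse hgf' one_ne_zero
    refine key.congr_of_eventuallyEq ?_
    have hstrict := hgc.hasStrictFDerivAt' hgf' one_ne_zero
    have hev : ∀ᶠ x in nhds a, Function.invFun g (g x) = x :=
      Filter.Eventually.of_forall fun x => Function.leftInverse_invFun hinj x
    exact hstrict.localInverse_unique hev
  exact ⟨⟨hinj, hsurj⟩, hcg, hinv⟩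
end

section
/- Let f : ℝ^d → ℝ be differentiable with L-Lipschitz gradient and let 0 < α < 1/L. For y ∈ ℝ^d, let x_y be the unique minimizer of ψ_y(x) = (1/2)‖x − y‖² − α f(x). Then x_y − α∇f(x_y) = y; in particular, the gradient map g(x) = x − α∇f(x) is surjective onto ℝ^d. -/
/-- For a differentiable `f` with `L`-Lipschitz gradient and `0 < α < 1/L`: if
`x_y` minimizes `ψ_y(x) = (1/2)‖x - y‖² - α f(x)`, then `x_y - α∇f(x_y) = y`;
in particular the gradient map `g(x) = x - α∇f(x)` is surjective. -/
theorem gradient_map_surjective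
    {d : ℕ} (f : EuclideanSpace ℝ (Fin d) → ℝ) (L α : ℝ)
    (hf : Differentiable ℝ f) (hL : 0 < L)
    (hlip : ∀ x y, ‖gradient f x - gradient f y‖ ≤ L * ‖x - y‖)
    (hα : 0 < α) (hαL : α < 1 / L)
    (g : EuclideanSpace ℝ (Fin d) → EuclideanSpace ℝ (Fin d))
    (hg : ∀ x, g x = x - α • gradient f x) :
    (∀ y xy, (∀ z, 1 / 2 * ‖xy - y‖ ^ 2 - α * f xy ≤ 1 / 2 * ‖z - y‖ ^ 2 - α * f z) →
      g xy = y) ∧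
    Function.Surjective g := by
  constructor
  · intro y xy hmin
    -- the minimized function has gradient `xy - y - α • ∇f xy` at `xy`
    have hG : HasGradientAt (fun z => 1 / 2 * ‖z - y‖ ^ 2 - α * f z)
        (xy - y - α • gradient f xy) xy := by
      rw [hasGradientAt_iff_hasFDerivAt]
      have h1 : HasFDerivAt (fun z : EuclideanSpace ℝ (Fin d) => z - y)
          (ContinuousLinearMap.id ℝ _) xy := (hasFDerivAt_id xy).sub_const y
      have h2 := h1.norm_sq
      have h3 := (hf xy).hasGradientAt.hasFDerivAt
      have h4 := (h2.const_mul (1 / 2 : ℝ)).sub (h3.const_mul α)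
      refine HasFDerivAt.congr_fderiv h4 ?_
      ext v
      simp only [InnerProductSpace.toDual_apply_apply, ContinuousLinearMap.sub_apply,
        ContinuousLinearMap.smul_apply, ContinuousLinearMap.smul_apply,
        ContinuousLinearMap.comp_apply, ContinuousLinearMap.id_apply, innerSL_apply_apply,
        inner_sub_left, inner_smul_left, RingHom.id_apply, smul_eq_mul,
        starRingEnd_apply, star_trivial]
      ring
    have hloc : IsLocalMin (fun z => 1 / 2 * ‖z - y‖ ^ 2 - α * f z) xy :=
      Filter.Eventually.of_forall fun z => hmin z
    have h0 := hloc.hasFDerivAt_eq_zero hG.hasFDerivAt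
    have hz : xy - y - α • gradient f xy = 0 := by
      have := (InnerProductSpace.toDual ℝ (EuclideanSpace ℝ (Fin d))).map_eq_zero_iff.mp h0
      exact this
    rw [hg]
    have : xy - α • gradient f xy - y = 0 := by
      rw [← hz]; abel
    exact sub_eq_zero.mp this
  · intro y
    have hαL1 : α * L < 1 := (lt_div_iff₀ hL).mp hαL
    set T : EuclideanSpace ℝ (Fin d) → EuclideanSpace ℝ (Fin d) :=
      fun x => y + α • gradient f x with hT
    have hKnn : (0 : ℝ) ≤ α * L := le_of_lt (mul_pos hα hL)
    set K : NNReal := ⟨α * L, hKnn⟩ with hKdef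
    have hlipT : LipschitzWith K T := by
      apply LipschitzWith.of_dist_le_mul
      intro x x'
      have : T x - T x' = α • (gradient f x - gradient f x') := by
        simp [hT, smul_sub]
      rw [dist_eq_norm, dist_eq_norm, this, norm_smul]
      calc ‖α‖ * ‖gradient f x - gradient f x'‖
          ≤ α * (L * ‖x - x'‖) := by
            rw [Real.norm_eq_abs, abs_of_pos hα]
            exact mul_le_mul_of_nonneg_left (hlip x x') (le_of_lt hα)
        _ = (K : ℝ) * ‖x - x'‖ := by change α * (L * ‖x - x'‖) = (α * L) * ‖x - x'‖; ring
    have hc : ContractingWith K T := by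
      constructor
      · exact_mod_cast hαL1
      · exact hlipT
    refine ⟨ContractingWith.fixedPoint T hc, ?_⟩
    have hfix : T (ContractingWith.fixedPoint T hc) = ContractingWith.fixedPoint T hc :=
      hc.fixedPoint_isFixedPt
    rw [hg]
    set x := ContractingWith.fixedPoint T hc
    have : y + α • gradient f x = x := hfix
    rw [sub_eq_iff_eq_add]
    exact this.symm
end

section
/- Let β ≥ 1, 0 < d ≤ 1, and let (e_k)_{k≥0} be a sequence of real numbers with 0 ≤ e_{k+1} ≤ e_k, e_k < 1, and e_k ≤ β (e_k − e_{k+1})^{1/d} for all k. Then e_{k+1} ≤ (1 − β^{−d}) e_k for all k, and hence e_k ≤ (1 − β^{−d})^k e_0, so e_k converges to 0 at a geometric (linear) rate. -/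
open Filter

/-- The recursion for the geometric rate: if `β ≥ 1`, `0 < d ≤ 1`, and a
sequence satisfies `0 ≤ e_{k+1} ≤ e_k < 1` and `e_k ≤ β(e_k - e_{k+1})^{1/d}`,
then `e_{k+1} ≤ (1 - β^{-d}) e_k`, hence `e_k ≤ (1 - β^{-d})^k e_0` and `e_k → 0`
geometrically. -/
theorem sequence_geometric_rate
    (β d : ℝ) (hβ : 1 ≤ β) (hd0 : 0 < d) (hd1 : d ≤ 1)
    (e : ℕ → ℝ)
    (hnonneg : ∀ k, 0 ≤ e (k + 1))
    (hmono : ∀ k, e (k + 1) ≤ e k)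
    (hlt : ∀ k, e k < 1)
    (hrec : ∀ k, e k ≤ β * (e k - e (k + 1)) ^ ((1 : ℝ) / d)) :
    (∀ k, e (k + 1) ≤ (1 - β ^ (-d)) * e k) ∧
    (∀ k, e k ≤ (1 - β ^ (-d)) ^ k * e 0) ∧
    Tendsto e atTop (nhds 0) := by
  have hβ0 : (0:ℝ) < β := lt_of_lt_of_le one_pos hβ
  have hβd0 : (0:ℝ) < β ^ (-d) := Real.rpow_pos_of_pos hβ0 _
  have hβd1 : β ^ (-d) ≤ 1 :=
    Real.rpow_le_one_of_one_le_of_nonpos hβ (neg_nonpos.mpr hd0.le)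
  have hr0 : 0 ≤ 1 - β ^ (-d) := by linarith
  have hr1 : 1 - β ^ (-d) < 1 := by linarith
  have hen : ∀ k, 0 ≤ e k := by
    intro k
    cases k with
    | zero => exact le_trans (hnonneg 0) (hmono 0)
    | succ n => exact hnonneg n
  have hstep : ∀ k, e (k + 1) ≤ (1 - β ^ (-d)) * e k := by
    intro k
    have hδ0 : 0 ≤ e k - e (k + 1) := sub_nonneg.mpr (hmono k)
    have h1 : e k / β ≤ (e k - e (k + 1)) ^ ((1:ℝ)/d) := by
      rw [div_le_iff₀ hβ0]
      linarith [hrec k, mul_comm β ((e k - e (k + 1)) ^ ((1:ℝ)/d))]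
    have h2 : (e k / β) ^ d ≤ e k - e (k + 1) := by
      have := Real.rpow_le_rpow (div_nonneg (hen k) hβ0.le) h1 hd0.le
      rwa [← Real.rpow_mul hδ0, one_div, inv_mul_cancel₀ hd0.ne',
        Real.rpow_one] at this
    have h3 : e k ≤ e k ^ d := by
      rcases eq_or_lt_of_le (hen k) with h | h
      · rw [← h, Real.zero_rpow hd0.ne']
      · calc e k = e k ^ (1:ℝ) := (Real.rpow_one _).symm
          _ ≤ e k ^ d := Real.rpow_le_rpow_of_exponent_ge h (hlt k).le hd1
    have h4 : β ^ (-d) * e k ≤ e k - e (k + 1) := by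
      have : (e k / β) ^ d = e k ^ d * β ^ (-d) := by
        rw [Real.div_rpow (hen k) hβ0.le, Real.rpow_neg hβ0.le, div_eq_mul_inv]
      calc β ^ (-d) * e k ≤ β ^ (-d) * e k ^ d := by
            exact mul_le_mul_of_nonneg_left h3 hβd0.le
        _ = (e k / β) ^ d := by rw [this]; ring
        _ ≤ e k - e (k + 1) := h2
    linarith
  refine ⟨hstep, ?_, ?_⟩
  · intro k
    induction k with
    | zero => simp
    | succ n ih =>
      calc e (n + 1) ≤ (1 - β ^ (-d)) * e n := hstep n
        _ ≤ (1 - β ^ (-d)) * ((1 - β ^ (-d)) ^ n * e 0) :=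
            mul_le_mul_of_nonneg_left ih hr0
        _ = (1 - β ^ (-d)) ^ (n + 1) * e 0 := by ring
  · have hgeo : Tendsto (fun k => (1 - β ^ (-d)) ^ k * e 0) atTop (nhds 0) := by
      have := tendsto_pow_atTop_nhds_zero_of_lt_one hr0 hr1
      simpa using this.mul_const (e 0)
    refine squeeze_zero hen ?_ hgeo
    intro k
    induction k with
    | zero => simp
    | succ n ih =>
      calc e (n + 1) ≤ (1 - β ^ (-d)) * e n := hstep n
        _ ≤ (1 - β ^ (-d)) * ((1 - β ^ (-d)) ^ n * e 0) :=
            mul_le_mul_of_nonneg_left ih hr0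
        _ = (1 - β ^ (-d)) ^ (n + 1) * e 0 := by ring
end

section
/- Let f : ℝ^d → ℝ be differentiable, let α > 0, let x_k be gradient descent iterates x_{k+1} = x_k − α∇f(x_k) converging to a point x* with f(x*) = 0 and f(x_k) ≥ 0 for all k, and let 0 < a ≤ 1/2 and m > 0. Suppose that for all sufficiently large k: (i) the Lojasiewicz inequality ‖∇f(x_k)‖ ≥ m f(x_k)^a holds, and (ii) the tail sums e_k := ∑_{j≥k} ‖x_{j+1} − x_j‖ are finite and satisfy e_k ≤ (2/(αm(1−a))) f(x_k)^{1−a}. Then there exist constants C > 0 and b ∈ (0,1), independent of k, such that ‖x_k − x*‖ ≤ C b^k for all k. -/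
open Filter

set_option maxHeartbeats 1000000

/-- Convergence rate of gradient descent under the Lojasiewicz gradient
inequality with exponent `0 < a ≤ 1/2`: the iterates converge to the limit `x*`
at a geometric rate. -/
theorem gradient_descent_geometric_rate
    {d : ℕ} (f : EuclideanSpace ℝ (Fin d) → ℝ) (hf : Differentiable ℝ f)
    (α : ℝ) (hα : 0 < α)
    (x : ℕ → EuclideanSpace ℝ (Fin d))
    (hiter : ∀ k, x (k + 1) = x k - α • gradient f (x k))
    (xstar : EuclideanSpace ℝ (Fin d))
    (hconv : Tendsto x atTop (nhds xstar))
    (hfstar : f xstar = 0)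
    (hfnonneg : ∀ k, 0 ≤ f (x k))
    (a m : ℝ) (ha0 : 0 < a) (ha1 : a ≤ 1 / 2) (hm : 0 < m)
    (hloj : ∀ᶠ k in atTop, m * f (x k) ^ a ≤ ‖gradient f (x k)‖)
    (htail : ∀ᶠ k in atTop,
      Summable (fun j : ℕ => ‖x (k + j + 1) - x (k + j)‖) ∧
      (∑' j : ℕ, ‖x (k + j + 1) - x (k + j)‖) ≤
        2 / (α * m * (1 - a)) * f (x k) ^ (1 - a)) :
    ∃ C > 0, ∃ b : ℝ, 0 < b ∧ b < 1 ∧ ∀ k, ‖x k - xstar‖ ≤ C * b ^ k := by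
  classical
  have h1a : (0:ℝ) < 1 - a := by linarith
  set e : ℕ → ℝ := fun k => ∑' j : ℕ, ‖x (k + j + 1) - x (k + j)‖ with he
  have he_nonneg : ∀ k, 0 ≤ e k := fun k => tsum_nonneg fun j => norm_nonneg _
  set c : ℝ := α * m * (1 - a) / 2 with hc
  have hc0 : 0 < c := by positivity
  -- f (x k) ^ (1 - a) → 0
  have hfx : Tendsto (fun k => f (x k)) atTop (nhds 0) := by
    have := (hf.continuous.tendsto xstar).comp hconv
    rwa [hfstar] at this
  have hfxr : Tendsto (fun k => f (x k) ^ (1 - a)) atTop (nhds 0) := by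
    have := hfx.rpow_const (p := 1 - a) (Or.inr (le_of_lt h1a))
    rwa [Real.zero_rpow (ne_of_gt h1a)] at this
  have hsmall : ∀ᶠ k in atTop, f (x k) ^ (1 - a) < 1 :=
    hfxr.eventually_lt_const (by norm_num)
  -- choose N
  obtain ⟨N, hN⟩ := eventually_atTop.1 (hloj.and (htail.and hsmall))
  -- step size of one iteration
  have hstep : ∀ k, ‖x (k + 1) - x k‖ = α * ‖gradient f (x k)‖ := by
    intro k
    rw [hiter k]
    rw [show x k - α • gradient f (x k) - x k = -(α • gradient f (x k)) by abel]
    rw [norm_neg, norm_smul, Real.norm_eq_abs, abs_of_pos hα]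
  -- main constants
  set θ : ℝ := min (α * m * c) (1/2) with hθ
  have hθ0 : 0 < θ := lt_min (by positivity) (by norm_num)
  have hθhalf : θ ≤ 1/2 := min_le_right _ _
  set b : ℝ := 1 - θ with hb
  have hb0 : 0 < b := by simp only [hb]; linarith
  have hb1 : b < 1 := by simp only [hb]; linarith
  -- bounds available at each k ≥ N
  have hbd : ∀ k, N ≤ k → c * e k ≤ f (x k) ^ (1 - a) := by
    intro k hk
    have h2 := (hN k hk).2.1.2
    have : c * e k ≤ c * (2 / (α * m * (1 - a)) * f (x k) ^ (1 - a)) :=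
      mul_le_mul_of_nonneg_left h2 (le_of_lt hc0)
    calc c * e k ≤ c * (2 / (α * m * (1 - a)) * f (x k) ^ (1 - a)) := this
      _ = f (x k) ^ (1 - a) := by
          rw [hc]; field_simp
  -- e k splits
  have hsplit : ∀ k, N ≤ k → e k = α * ‖gradient f (x k)‖ + e (k + 1) := by
    intro k hk
    have hsum := (hN k hk).2.1.1
    have := Summable.tsum_eq_zero_add hsum
    simp only [he]
    rw [this]
    congr 1
    · simpa using hstep k
    · apply tsum_congr
      intro j
      rw [show k + (j + 1) + 1 = k + 1 + j + 1 by omega, show k + (j + 1) = k + 1 + j by omega]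
  -- key contraction
  have hkey : ∀ k, N ≤ k → e (k + 1) ≤ b * e k := by
    intro k hk
    have hek := he_nonneg k
    rcases eq_or_lt_of_le hek with h0 | h0
    · -- e k = 0
      have := hsplit k hk
      have h1 : e (k + 1) ≤ e k := by nlinarith [norm_nonneg (gradient f (x k))]
      have h2 := he_nonneg (k+1)
      nlinarith
    · -- e k > 0
      have hce1 : c * e k ≤ 1 := by
        have := hbd k hk
        have := (hN k hk).2.2
        linarith
      have hce0 : 0 < c * e k := by positivity
      -- f^a ≥ (c e k)^(a/(1-a))
      have hp0 : 0 ≤ a / (1 - a) := by positivity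
      have hp1 : a / (1 - a) ≤ 1 := by
        rw [div_le_one h1a]; linarith
      have hfa : (c * e k) ^ (a / (1 - a)) ≤ f (x k) ^ a := by
        have h1 : (c * e k) ^ (a / (1 - a)) ≤ (f (x k) ^ (1 - a)) ^ (a / (1 - a)) :=
          Real.rpow_le_rpow (le_of_lt hce0) (hbd k hk) hp0
        have h2 : (f (x k) ^ (1 - a)) ^ (a / (1 - a)) = f (x k) ^ a := by
          rw [← Real.rpow_mul (hfnonneg k)]
          congr 1
          field_simp
        rwa [h2] at h1
      have hlin : c * e k ≤ (c * e k) ^ (a / (1 - a)) := by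
        have := Real.rpow_le_rpow_of_exponent_ge hce0 hce1 hp1
        rwa [Real.rpow_one] at this
      have hloj' := (hN k hk).1
      have hgrad : θ * e k ≤ α * ‖gradient f (x k)‖ := by
        have h3 : α * m * (c * e k) ≤ α * m * f (x k) ^ a := by
          have : c * e k ≤ f (x k) ^ a := le_trans hlin hfa
          nlinarith
        have h4 : α * (m * f (x k) ^ a) ≤ α * ‖gradient f (x k)‖ :=
          mul_le_mul_of_nonneg_left hloj' (le_of_lt hα)
        have h5 : θ * e k ≤ α * m * c * e k := by
          have : θ ≤ α * m * c := min_le_left _ _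
          nlinarith
        nlinarith
      have := hsplit k hk
      simp only [hb]
      nlinarith
  -- iterate: e (N + n) ≤ e N * b ^ n
  have hiterate : ∀ n, e (N + n) ≤ e N * b ^ n := by
    intro n
    induction n with
    | zero => simp
    | succ n ih =>
      have h1 := hkey (N + n) (Nat.le_add_right _ _)
      calc e (N + (n + 1)) = e (N + n + 1) := by ring_nf
        _ ≤ b * e (N + n) := h1
        _ ≤ b * (e N * b ^ n) := mul_le_mul_of_nonneg_left ih (le_of_lt hb0)
        _ = e N * b ^ (n + 1) := by ring
  -- dist bound: ‖x k - xstar‖ ≤ e k for k ≥ N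
  have hdist : ∀ k, N ≤ k → ‖x k - xstar‖ ≤ e k := by
    intro k hk
    have hsum := (hN k hk).2.1.1
    have htd : Tendsto (fun j => x (k + j)) atTop (nhds xstar) :=
      (hconv.comp (tendsto_add_atTop_nat k)).congr (fun j => congrArg x (Nat.add_comm j k))
    have := dist_le_tsum_of_dist_le_of_tendsto (f := fun j => x (k + j))
      (fun j => ‖x (k + j + 1) - x (k + j)‖)
      (fun j => le_of_eq (by rw [dist_eq_norm, norm_sub_rev]; rfl)) hsum htd 0
    simp only [add_zero, zero_add] at this
    rw [dist_eq_norm] at this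
    exact this
  -- assemble
  set M : ℝ := (∑ k ∈ Finset.range N, ‖x k - xstar‖) + e N + 1 with hM
  have hM1 : 1 ≤ M := by
    have h1 : 0 ≤ ∑ k ∈ Finset.range N, ‖x k - xstar‖ :=
      Finset.sum_nonneg fun k _ => norm_nonneg _
    have h2 := he_nonneg N
    simp only [hM]; linarith
  have hbN : 0 < b ^ N := pow_pos hb0 N
  refine ⟨M / b ^ N, by positivity, b, hb0, hb1, ?_⟩
  intro k
  rcases le_or_gt N k with hk | hk
  · obtain ⟨n, rfl⟩ := Nat.exists_eq_add_of_le hk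
    calc ‖x (N + n) - xstar‖ ≤ e (N + n) := hdist _ (Nat.le_add_right _ _)
      _ ≤ e N * b ^ n := hiterate n
      _ ≤ M / b ^ N * b ^ (N + n) := by
          have h2 : 0 ≤ ∑ j ∈ Finset.range N, ‖x j - xstar‖ :=
            Finset.sum_nonneg fun j _ => norm_nonneg _
          have hEM : e N ≤ M := by simp only [hM]; linarith
          have heq : M / b ^ N * b ^ (N + n) = M * b ^ n := by
            rw [pow_add]; field_simp
          rw [heq]
          exact mul_le_mul_of_nonneg_right hEM (le_of_lt (pow_pos hb0 n))
  · have h1 : ‖x k - xstar‖ ≤ M := by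
      have h2 : ‖x k - xstar‖ ≤ ∑ j ∈ Finset.range N, ‖x j - xstar‖ :=
        Finset.single_le_sum (f := fun j => ‖x j - xstar‖)
          (fun j _ => norm_nonneg _) (Finset.mem_range.2 hk)
      have h3 := he_nonneg N
      simp only [hM]; linarith
    have h4 : b ^ N ≤ b ^ k := pow_le_pow_of_le_one (le_of_lt hb0) (le_of_lt hb1) (le_of_lt hk)
    calc ‖x k - xstar‖ ≤ M := h1
      _ = M / b ^ N * b ^ N := by field_simp
      _ ≤ M / b ^ N * b ^ k := mul_le_mul_of_nonneg_left h4 (by positivity)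
end

section
/- Let f : ℝ^d → ℝ be differentiable, let α > 0, let x_k be gradient descent iterates x_{k+1} = x_k − α∇f(x_k) converging to a point x* with f(x*) = 0 and f(x_k) ≥ 0 for all k, and let 1/2 < a < 1 and m > 0. Suppose that for all sufficiently large k: (i) the Lojasiewicz inequality ‖∇f(x_k)‖ ≥ m f(x_k)^a holds, and (ii) the tail sums e_k := ∑_{j≥k} ‖x_{j+1} − x_j‖ are finite and satisfy e_k ≤ (2/(αm(1−a))) f(x_k)^{1−a}. Then there exists a constant C > 0, independent of k, such that ‖x_k − x*‖ ≤ C / k^{(1−a)/(2a−1)} for all k ≥ 1. -/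
open Filter

/-- Convexity-type gradient inequality for `t ↦ t ^ (-β)`. -/
lemma aux_rpow_convex_gap {β X Y : ℝ} (hβ : 0 < β) (hX : 0 < X) (hXY : X ≤ Y) :
    β * Y ^ (-β - 1) * (Y - X) ≤ X ^ (-β) - Y ^ (-β) := by
  rcases eq_or_lt_of_le hXY with rfl | hlt
  · simp
  · have hY : 0 < Y := hX.trans hlt
    have hcont : ContinuousOn (fun t : ℝ => t ^ (-β)) (Set.Icc X Y) := fun t ht =>
      (Real.continuousAt_rpow_const t _ (Or.inl (ne_of_gt (hX.trans_le ht.1)))).continuousWithinAt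
    have hderiv : ∀ t ∈ Set.Ioo X Y,
        HasDerivAt (fun t : ℝ => t ^ (-β)) (-β * t ^ (-β - 1)) t := fun t ht =>
      Real.hasDerivAt_rpow_const (Or.inl (ne_of_gt (hX.trans ht.1)))
    obtain ⟨ξ, hξ, hslope⟩ := exists_hasDerivAt_eq_slope _ _ hlt hcont hderiv
    rw [eq_div_iff (sub_ne_zero.mpr (ne_of_gt hlt))] at hslope
    have hξY : Y ^ (-β - 1) ≤ ξ ^ (-β - 1) :=
      Real.rpow_le_rpow_of_nonpos (hX.trans hξ.1) hξ.2.le (by linarith)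
    have hmul : β * (Y - X) * (Y ^ (-β - 1)) ≤ β * (Y - X) * (ξ ^ (-β - 1)) :=
      mul_le_mul_of_nonneg_left hξY (by nlinarith)
    linarith [hmul, hslope]

/-- Once a `C / k ^ p` bound holds for large `k`, it holds (with a bigger
constant) for all `k ≥ 1`. -/
lemma aux_extend_bound {u : ℕ → ℝ} (hu : ∀ k, 0 ≤ u k) {p : ℝ} (hp : 0 ≤ p)
    (N : ℕ) {C : ℝ} (hC : 0 < C)
    (h : ∀ k : ℕ, N + 1 ≤ k → u k ≤ C / (k : ℝ) ^ p) :
    ∃ C' > 0, ∀ k : ℕ, 1 ≤ k → u k ≤ C' / (k : ℝ) ^ p := by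
  set B : ℝ := ∑ i ∈ Finset.range (N + 1), u i with hB
  have hBnn : 0 ≤ B := Finset.sum_nonneg fun i _ => hu i
  have hNp : (0:ℝ) < ((N : ℝ) + 1) ^ p := Real.rpow_pos_of_pos (by positivity) p
  refine ⟨C + (B + 1) * ((N : ℝ) + 1) ^ p, by positivity, ?_⟩
  intro k hk
  have hkp : (0:ℝ) < (k : ℝ) ^ p :=
    Real.rpow_pos_of_pos (by exact_mod_cast Nat.pos_of_ne_zero (by omega)) p
  rcases le_or_gt (N + 1) k with hge | hlt
  · refine (h k hge).trans ?_
    gcongr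
    nlinarith
  · have huk : u k ≤ B := by
      refine Finset.single_le_sum (fun i _ => hu i) ?_
      exact Finset.mem_range.mpr (by omega)
    have hkNp : (k : ℝ) ^ p ≤ ((N : ℝ) + 1) ^ p := by
      apply Real.rpow_le_rpow (by positivity) ?_ hp
      exact_mod_cast Nat.le_of_lt_succ (by omega)
    rw [le_div_iff₀ hkp]
    nlinarith [hu k]

set_option maxHeartbeats 1000000 in
/-- Convergence rate of gradient descent under the Lojasiewicz gradient
inequality with exponent `1/2 < a < 1`: the iterates converge to the limit `x*`
at the sublinear rate `C / k^{(1-a)/(2a-1)}`. -/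
theorem gradient_descent_sublinear_rate
    {d : ℕ} (f : EuclideanSpace ℝ (Fin d) → ℝ) (hf : Differentiable ℝ f)
    (α : ℝ) (hα : 0 < α)
    (x : ℕ → EuclideanSpace ℝ (Fin d))
    (hiter : ∀ k, x (k + 1) = x k - α • gradient f (x k))
    (xstar : EuclideanSpace ℝ (Fin d))
    (hconv : Tendsto x atTop (nhds xstar))
    (hfstar : f xstar = 0)
    (hfnonneg : ∀ k, 0 ≤ f (x k))
    (a m : ℝ) (ha0 : 1 / 2 < a) (ha1 : a < 1) (hm : 0 < m)
    (hloj : ∀ᶠ k in atTop, m * f (x k) ^ a ≤ ‖gradient f (x k)‖)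
    (htail : ∀ᶠ k in atTop,
      Summable (fun j : ℕ => ‖x (k + j + 1) - x (k + j)‖) ∧
      (∑' j : ℕ, ‖x (k + j + 1) - x (k + j)‖) ≤
        2 / (α * m * (1 - a)) * f (x k) ^ (1 - a)) :
    ∃ C > 0, ∀ k : ℕ, 1 ≤ k →
      ‖x k - xstar‖ ≤ C / (k : ℝ) ^ ((1 - a) / (2 * a - 1)) := by
  obtain ⟨N, hN⟩ := eventually_atTop.1 (hloj.and htail)
  have h1a : (0:ℝ) < 1 - a := by linarith
  have h2a : (0:ℝ) < 2 * a - 1 := by linarith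
  set p : ℝ := (1 - a) / (2 * a - 1) with hpdef
  set β : ℝ := (2 * a - 1) / (1 - a) with hβdef
  have hp : 0 < p := div_pos h1a h2a
  have hβ : 0 < β := div_pos h2a h1a
  have hβp : β * p = 1 := by rw [hpdef, hβdef]; field_simp
  have hβ1 : β + 1 = a / (1 - a) := by rw [hβdef]; field_simp; ring
  set K : ℝ := 2 / (α * m * (1 - a)) with hKdef
  have hK : 0 < K := by rw [hKdef]; positivity
  set c : ℝ := α * m / K ^ (a / (1 - a)) with hcdef
  have hc : 0 < c := div_pos (by positivity) (Real.rpow_pos_of_pos hK _)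
  set e : ℕ → ℝ := fun k => ∑' j : ℕ, ‖x (k + j + 1) - x (k + j)‖ with hedef
  have he0 : ∀ k, 0 ≤ e k := fun k => tsum_nonneg fun j => norm_nonneg _
  have hsum : ∀ k, N ≤ k → Summable (fun j : ℕ => ‖x (k + j + 1) - x (k + j)‖) :=
    fun k hk => (hN k hk).2.1
  have hEk : ∀ k, N ≤ k → e k ≤ K * f (x k) ^ (1 - a) := fun k hk => (hN k hk).2.2
  -- decomposition of the tail sum
  have hdecomp : ∀ k, N ≤ k → e k = ‖x (k + 1) - x k‖ + e (k + 1) := by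
    intro k hk
    have h0 := Summable.tsum_eq_zero_add (hsum k hk)
    have h1 : ∀ j : ℕ, ‖x (k + (j + 1) + 1) - x (k + (j + 1))‖
        = ‖x ((k + 1) + j + 1) - x ((k + 1) + j)‖ := by
      intro j
      rw [show k + (j + 1) + 1 = (k + 1) + j + 1 by omega,
        show k + (j + 1) = (k + 1) + j by omega]
    calc e k = ‖x (k + 0 + 1) - x (k + 0)‖
          + ∑' j : ℕ, ‖x (k + (j + 1) + 1) - x (k + (j + 1))‖ := h0
      _ = ‖x (k + 1) - x k‖ + e (k + 1) := by
          rw [tsum_congr h1]; norm_num; rfl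
  -- distance to the limit is bounded by the tail sum
  have hdist : ∀ k, N ≤ k → ‖x k - xstar‖ ≤ e k := by
    intro k hk
    obtain ⟨n, rfl⟩ : ∃ n, k = N + n := ⟨k - N, by omega⟩
    have hten : Tendsto (fun n : ℕ => x (N + n)) atTop (nhds xstar) := by
      simpa [Function.comp_def, add_comm] using hconv.comp (tendsto_add_atTop_nat N)
    have hd := dist_le_tsum_of_dist_le_of_tendsto
      (f := fun n : ℕ => x (N + n)) (fun j : ℕ => ‖x (N + j + 1) - x (N + j)‖)
      (fun j => le_of_eq (by rw [dist_eq_norm, norm_sub_rev]; rfl)) (hsum N le_rfl) hten n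
    rw [dist_eq_norm] at hd
    calc ‖x (N + n) - xstar‖ ≤ ∑' j : ℕ, ‖x (N + (n + j) + 1) - x (N + (n + j))‖ := hd
      _ = e (N + n) := tsum_congr fun j => by
          rw [show N + (n + j) + 1 = (N + n) + j + 1 by omega,
            show N + (n + j) = (N + n) + j by omega]
  -- one-step decrease
  have hstep : ∀ k, N ≤ k → c * e k ^ (β + 1) ≤ e k - e (k + 1) := by
    intro k hk
    have hnorm : ‖x (k + 1) - x k‖ = α * ‖gradient f (x k)‖ := by
      rw [hiter k, sub_sub_cancel_left, norm_neg, norm_smul, Real.norm_eq_abs,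
        abs_of_pos hα]
    have hgrad := (hN k hk).1
    have hfk := hfnonneg k
    have hfa : (e k / K) ^ (a / (1 - a)) ≤ f (x k) ^ a := by
      have h2 : e k / K ≤ f (x k) ^ (1 - a) := by
        rw [div_le_iff₀ hK]; nlinarith [hEk k hk]
      calc (e k / K) ^ (a / (1 - a))
          ≤ (f (x k) ^ (1 - a)) ^ (a / (1 - a)) :=
            Real.rpow_le_rpow (div_nonneg (he0 k) hK.le) h2
              (div_nonneg (by linarith) h1a.le)
        _ = f (x k) ^ a := by
            rw [← Real.rpow_mul hfk]; congr 1; field_simp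
    have hdiv : (e k / K) ^ (a / (1 - a)) = e k ^ (a / (1 - a)) / K ^ (a / (1 - a)) :=
      Real.div_rpow (he0 k) hK.le _
    have hdc := hdecomp k hk
    calc c * e k ^ (β + 1) = α * m * ((e k / K) ^ (a / (1 - a))) := by
          rw [hβ1, hdiv, hcdef]; ring
      _ ≤ α * m * f (x k) ^ a := by
          apply mul_le_mul_of_nonneg_left hfa (by positivity)
      _ = α * (m * f (x k) ^ a) := by ring
      _ ≤ α * ‖gradient f (x k)‖ := mul_le_mul_of_nonneg_left hgrad hα.le
      _ = e k - e (k + 1) := by rw [← hnorm]; linarith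
  have hmono : ∀ k, N ≤ k → e (k + 1) ≤ e k := by
    intro k hk
    nlinarith [hstep k hk, Real.rpow_nonneg (he0 k) (β + 1), hc.le,
      mul_nonneg hc.le (Real.rpow_nonneg (he0 k) (β + 1))]
  have hmono' : ∀ n k, N ≤ k → e (k + n) ≤ e k := by
    intro n
    induction n with
    | zero => intro k _; simp
    | succ n ih => intro k hk; exact (hmono (k + n) (by omega)).trans (ih k hk)
  -- the gap inequality for e ^ (-β)
  have hgap : ∀ k, N ≤ k → 0 < e (k + 1) → e k ^ (-β) + β * c ≤ e (k + 1) ^ (-β) := by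
    intro k hk hpos
    have hle : e (k + 1) ≤ e k := hmono k hk
    have hY : 0 < e k := hpos.trans_le hle
    have haux := aux_rpow_convex_gap hβ hpos hle
    have hstep' := hstep k hk
    have hY1 : e k ^ (-β - 1) * e k ^ (β + 1) = 1 := by
      rw [← Real.rpow_add hY]; norm_num
    have hYnn : 0 ≤ e k ^ (-β - 1) := Real.rpow_nonneg (he0 k) _
    have h3 : β * e k ^ (-β - 1) * (c * e k ^ (β + 1))
        ≤ β * e k ^ (-β - 1) * (e k - e (k + 1)) :=
      mul_le_mul_of_nonneg_left hstep' (mul_nonneg hβ.le hYnn)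
    have h2 : β * e k ^ (-β - 1) * (c * e k ^ (β + 1)) = β * c := by
      linear_combination β * c * hY1
    linarith
  -- iterate the gap inequality
  have hind : ∀ n : ℕ, 0 < e (N + n) →
      e N ^ (-β) + n * (β * c) ≤ e (N + n) ^ (-β) := by
    intro n
    induction n with
    | zero => intro _; simp
    | succ n ih =>
        intro hpos
        have hposn : 0 < e (N + n) := hpos.trans_le (hmono (N + n) (by omega))
        have hg := hgap (N + n) (by omega) hpos
        have := ih hposn
        push_cast
        push_cast at this
        simp only [← Nat.add_assoc]
        linarith
  -- main bound for large k
  set C0 : ℝ := (min (e N ^ (-β)) (β * c)) ^ (-p) * ((N : ℝ) + 1) ^ p + 1 with hC0def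
  have hC0 : 0 < C0 := by
    have h1 : 0 ≤ min (e N ^ (-β)) (β * c) :=
      le_min (Real.rpow_nonneg (he0 N) _) (mul_nonneg hβ.le hc.le)
    have h2 := mul_nonneg (Real.rpow_nonneg h1 (-p))
      (Real.rpow_nonneg (by positivity : (0:ℝ) ≤ (N : ℝ) + 1) p)
    rw [hC0def]; linarith
  have key : ∀ k : ℕ, N + 1 ≤ k → ‖x k - xstar‖ ≤ C0 / (k : ℝ) ^ p := by
    intro k hk
    obtain ⟨n, rfl⟩ : ∃ n, k = N + n := ⟨k - N, by omega⟩
    have hkpos : (0:ℝ) < ((N + n : ℕ) : ℝ) := by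
      exact_mod_cast Nat.pos_of_ne_zero (by omega)
    have hkp : (0:ℝ) < ((N + n : ℕ) : ℝ) ^ p := Real.rpow_pos_of_pos hkpos p
    by_cases hpos : 0 < e (N + n)
    · have heN : 0 < e N := hpos.trans_le (hmono' n N le_rfl)
      set δ : ℝ := min (e N ^ (-β)) (β * c) with hδdef
      have hδ : 0 < δ := lt_min (Real.rpow_pos_of_pos heN _) (mul_pos hβ hc)
      have hN1 : (0:ℝ) < (N : ℝ) + 1 := by positivity
      have h1 : δ * ((n : ℝ) + 1) ≤ e (N + n) ^ (-β) := by
        have hi := hind n hpos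
        have h2 : δ ≤ e N ^ (-β) := min_le_left _ _
        have h3 : δ ≤ β * c := min_le_right _ _
        have h4 := mul_le_mul_of_nonneg_left h3 (Nat.cast_nonneg (α := ℝ) n)
        linarith
      have h7 : ((N + n : ℕ) : ℝ) ≤ ((N : ℝ) + 1) * ((n : ℝ) + 1) := by
        push_cast
        have := mul_nonneg (Nat.cast_nonneg (α := ℝ) N) (Nat.cast_nonneg (α := ℝ) n)
        nlinarith
      have h1' : δ / ((N : ℝ) + 1) * ((N + n : ℕ) : ℝ) ≤ e (N + n) ^ (-β) := by
        calc δ / ((N : ℝ) + 1) * ((N + n : ℕ) : ℝ)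
            ≤ δ / ((N : ℝ) + 1) * (((N : ℝ) + 1) * ((n : ℝ) + 1)) :=
              mul_le_mul_of_nonneg_left h7 (le_of_lt (div_pos hδ hN1))
          _ = δ * ((n : ℝ) + 1) := by field_simp
          _ ≤ _ := h1
      have hA : 0 < δ / ((N : ℝ) + 1) * ((N + n : ℕ) : ℝ) :=
        mul_pos (div_pos hδ hN1) hkpos
      have h4 : e (N + n) ≤ (δ / ((N : ℝ) + 1) * ((N + n : ℕ) : ℝ)) ^ (-p) := by
        have h5 := Real.rpow_le_rpow_of_nonpos hA h1' (neg_nonpos.mpr hp.le)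
        calc e (N + n) = (e (N + n) ^ (-β)) ^ (-p) := by
              rw [← Real.rpow_mul (he0 _), neg_mul_neg, hβp, Real.rpow_one]
          _ ≤ _ := h5
      have h6 : (δ / ((N : ℝ) + 1) * ((N + n : ℕ) : ℝ)) ^ (-p)
          = (δ / ((N : ℝ) + 1)) ^ (-p) * ((N + n : ℕ) : ℝ) ^ (-p) :=
        Real.mul_rpow (le_of_lt (div_pos hδ hN1)) hkpos.le
      have h9 : (δ / ((N : ℝ) + 1)) ^ (-p) = δ ^ (-p) * ((N : ℝ) + 1) ^ p := by
        rw [div_eq_mul_inv, Real.mul_rpow hδ.le (by positivity),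
          Real.inv_rpow (by positivity), Real.rpow_neg hN1.le p, inv_inv]
      calc ‖x (N + n) - xstar‖ ≤ e (N + n) := hdist _ (by omega)
        _ ≤ (δ / ((N : ℝ) + 1) * ((N + n : ℕ) : ℝ)) ^ (-p) := h4
        _ = δ ^ (-p) * ((N : ℝ) + 1) ^ p * ((N + n : ℕ) : ℝ) ^ (-p) := by
            rw [h6, h9]
        _ = δ ^ (-p) * ((N : ℝ) + 1) ^ p / ((N + n : ℕ) : ℝ) ^ p := by
            rw [Real.rpow_neg hkpos.le, div_eq_mul_inv]
        _ ≤ C0 / ((N + n : ℕ) : ℝ) ^ p := by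
            gcongr
            rw [hC0def]; linarith
    · have hz : e (N + n) = 0 := le_antisymm (not_lt.mp hpos) (he0 _)
      have hd := hdist (N + n) (by omega)
      rw [hz] at hd
      exact hd.trans (by positivity)
  obtain ⟨C', hC', hall⟩ := aux_extend_bound (fun k => norm_nonneg _) hp.le N hC0 key
  exact ⟨C', hC', fun k hk => hall k hk⟩
end

section
/- Let f : ℝ^d → ℝ be continuously differentiable with L-Lipschitz gradient, with compact sublevel sets {x : f(x) ≤ c} for every c, and with isolated critical points (every critical point has a neighborhood containing no other critical point). Let 0 < α < 1/L. Then for every initial point x₀, the gradient descent iterates x_k = g^k(x₀), where g(x) = x − α∇f(x), converge to a limit, and that limit is a critical point of f. -/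
open Filter Function

open Topology

section aux

variable {d : ℕ}

lemma gd_gradient_continuous {f : EuclideanSpace ℝ (Fin d) → ℝ}
    (hf : ContDiff ℝ 1 f) : Continuous (gradient f) := by
  have h1 : Continuous (fderiv ℝ f) := hf.continuous_fderiv one_ne_zero
  exact (InnerProductSpace.toDual ℝ _).symm.continuous.comp h1

lemma gd_descent_lemma {f : EuclideanSpace ℝ (Fin d) → ℝ} {L : ℝ}
    (hf : ContDiff ℝ 1 f)
    (hlip : ∀ x y, ‖gradient f x - gradient f y‖ ≤ L * ‖x - y‖)
    (x y : EuclideanSpace ℝ (Fin d)) :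
    f y ≤ f x + inner ℝ (gradient f x) (y - x) + L / 2 * ‖y - x‖ ^ 2 := by
  set v := y - x with hv
  have hgc : Continuous (gradient f) := gd_gradient_continuous hf
  have hline : ∀ t : ℝ, HasDerivAt (fun s : ℝ => x + s • v) v t := fun t => by
    simpa using ((hasDerivAt_id t).smul_const v).const_add x
  have hder : ∀ t : ℝ, HasDerivAt (fun s : ℝ => f (x + s • v))
      ((inner ℝ (gradient f (x + t • v)) v : ℝ)) t := fun t => by
    have hgd := ((hf.differentiable one_ne_zero) (x + t • v)).hasGradientAt.hasFDerivAt
    have := hgd.comp_hasDerivAt t (hline t)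
    simpa [InnerProductSpace.toDual_apply_apply, Function.comp_def] using this
  have hcont : Continuous fun t : ℝ => (inner ℝ (gradient f (x + t • v)) v : ℝ) := by
    apply Continuous.inner
    · exact hgc.comp (by continuity)
    · exact continuous_const
  have hint : ∫ t in (0:ℝ)..1, (inner ℝ (gradient f (x + t • v)) v : ℝ)
      = f (x + (1:ℝ) • v) - f (x + (0:ℝ) • v) :=
    intervalIntegral.integral_eq_sub_of_hasDerivAt (fun t _ => hder t)
      (hcont.intervalIntegrable 0 1)
  have hmono : ∫ t in (0:ℝ)..1, (inner ℝ (gradient f (x + t • v)) v : ℝ)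
      ≤ ∫ t in (0:ℝ)..1, ((inner ℝ (gradient f x) v : ℝ) + (L * ‖v‖ ^ 2) * t) := by
    apply intervalIntegral.integral_mono_on (by norm_num)
      (hcont.intervalIntegrable 0 1)
      ((continuous_const.add (continuous_const.mul continuous_id')).intervalIntegrable 0 1)
    intro t ht
    rcases ht with ⟨ht0, ht1⟩
    have h1 : (inner ℝ (gradient f (x + t • v)) v : ℝ)
        = inner ℝ (gradient f x) v + inner ℝ (gradient f (x + t • v) - gradient f x) v := by
      rw [inner_sub_left]; ring
    rw [h1]
    have h2 : (inner ℝ (gradient f (x + t • v) - gradient f x) v : ℝ)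
        ≤ ‖gradient f (x + t • v) - gradient f x‖ * ‖v‖ := real_inner_le_norm _ _
    have h3 : ‖gradient f (x + t • v) - gradient f x‖ ≤ L * (t * ‖v‖) := by
      have := hlip (x + t • v) x
      simpa [norm_smul, abs_of_nonneg ht0] using this
    have h4 : ‖gradient f (x + t • v) - gradient f x‖ * ‖v‖ ≤ L * (t * ‖v‖) * ‖v‖ :=
      mul_le_mul_of_nonneg_right h3 (norm_nonneg _)
    simp only [Pi.add_apply, Pi.mul_apply]
    nlinarith [norm_nonneg v]
  have hval : ∫ t in (0:ℝ)..1, ((inner ℝ (gradient f x) v : ℝ) + (L * ‖v‖ ^ 2) * t)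
      = inner ℝ (gradient f x) v + L / 2 * ‖v‖ ^ 2 := by
    rw [intervalIntegral.integral_add (f := fun _ => (inner ℝ (gradient f x) v : ℝ))
      (g := fun t => (L * ‖v‖ ^ 2) * t) intervalIntegrable_const
      ((continuous_const.mul continuous_id').intervalIntegrable 0 1),
      intervalIntegral.integral_const_mul, integral_id, intervalIntegral.integral_const]
    simp
    ring
  have hy : x + (1:ℝ) • v = y := by rw [hv]; simp
  have hx0 : x + (0:ℝ) • v = x := by simp
  rw [hy, hx0] at hint
  linarith [hmono, hint.symm, hval]

lemma gd_descent_step {f : EuclideanSpace ℝ (Fin d) → ℝ} {L α : ℝ}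
    (hf : ContDiff ℝ 1 f)
    (hlip : ∀ x y, ‖gradient f x - gradient f y‖ ≤ L * ‖x - y‖)
    (hα : 0 < α) (x : EuclideanSpace ℝ (Fin d)) :
    f (x - α • gradient f x) ≤ f x - α * (1 - α * L / 2) * ‖gradient f x‖ ^ 2 := by
  have h := gd_descent_lemma hf hlip x (x - α • gradient f x)
  have h1 : x - α • gradient f x - x = -(α • gradient f x) := by abel
  rw [h1] at h
  have h2 : (inner ℝ (gradient f x) (-(α • gradient f x)) : ℝ)
      = -(α * ‖gradient f x‖ ^ 2) := by
    rw [inner_neg_right, real_inner_smul_right, real_inner_self_eq_norm_sq]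
  have h3 : ‖-(α • gradient f x)‖ = α * ‖gradient f x‖ := by
    rw [norm_neg, norm_smul, Real.norm_eq_abs, abs_of_pos hα]
  rw [h2, h3] at h
  nlinarith [norm_nonneg (gradient f x), sq_nonneg (‖gradient f x‖)]

end aux

/-- For a `C¹` function with `L`-Lipschitz gradient, compact sublevel sets and
isolated critical points, gradient descent with step size `0 < α < 1/L`
converges from every initialization, and the limit is a critical point. -/
theorem gradient_descent_converges_to_critical_point
    {d : ℕ} (f : EuclideanSpace ℝ (Fin d) → ℝ) (L α : ℝ)
    (hf : ContDiff ℝ 1 f) (hL : 0 < L)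
    (hlip : ∀ x y, ‖gradient f x - gradient f y‖ ≤ L * ‖x - y‖)
    (hsublevel : ∀ c : ℝ, IsCompact {x | f x ≤ c})
    (hisolated : ∀ x, gradient f x = 0 →
      ∃ U ∈ nhds x, ∀ y ∈ U, gradient f y = 0 → y = x)
    (hα : 0 < α) (hαL : α < 1 / L)
    (g : EuclideanSpace ℝ (Fin d) → EuclideanSpace ℝ (Fin d))
    (hg : ∀ x, g x = x - α • gradient f x) :
    ∀ x₀, ∃ xstar, Tendsto (fun k => g^[k] x₀) atTop (nhds xstar) ∧
      gradient f xstar = 0 := by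
  intro x₀
  have hαL1 : α * L < 1 := by rw [lt_div_iff₀ hL] at hαL; nlinarith
  set c := α * (1 - α * L / 2) with hc_def
  have hc : 0 < c := mul_pos hα (by nlinarith)
  set x : ℕ → EuclideanSpace ℝ (Fin d) := fun k => g^[k] x₀ with hx
  have hsucc : ∀ k, x (k + 1) = g (x k) := fun k => Function.iterate_succ_apply' g k x₀
  have hdesc : ∀ k, f (x (k + 1)) ≤ f (x k) - c * ‖gradient f (x k)‖ ^ 2 := by
    intro k
    rw [hsucc, hg]
    exact gd_descent_step hf hlip hα (x k)
  have hA : Antitone fun k => f (x k) := antitone_nat_of_succ_le fun k => by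
    nlinarith [hdesc k, mul_nonneg hc.le (sq_nonneg ‖gradient f (x k)‖)]
  set K := {z | f z ≤ f x₀} with hK_def
  have hK : IsCompact K := hsublevel _
  have hxK : ∀ k, x k ∈ K := fun k => hA (Nat.zero_le k)
  obtain ⟨zm, hzmK, hzm⟩ := hK.exists_isMinOn (Set.nonempty_of_mem (show x₀ ∈ K by rw [hK_def]; exact Set.mem_setOf_eq ▸ le_rfl)) hf.continuous.continuousOn
  have hbdd : BddBelow (Set.range fun k => f (x k)) :=
    ⟨f zm, by rintro y ⟨k, rfl⟩; exact hzm (hxK k)⟩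
  have hflim : Tendsto (fun k => f (x k)) atTop (𝓝 (⨅ k, f (x k))) :=
    tendsto_atTop_ciInf hA hbdd
  have hdiff : Tendsto (fun k => f (x k) - f (x (k + 1))) atTop (𝓝 0) := by
    have h2 : Tendsto (fun k => f (x (k + 1))) atTop (𝓝 (⨅ k, f (x k))) :=
      hflim.comp (tendsto_add_atTop_nat 1)
    simpa using hflim.sub h2
  have hsq : Tendsto (fun k => c * ‖gradient f (x k)‖ ^ 2) atTop (𝓝 0) :=
    squeeze_zero (fun k => by positivity) (fun k => by linarith [hdesc k]) hdiff
  have hsq' : Tendsto (fun k => ‖gradient f (x k)‖ ^ 2) atTop (𝓝 0) := by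
    have h := hsq.const_mul c⁻¹
    simpa [← mul_assoc, inv_mul_cancel₀ hc.ne'] using h
  have hnorm : Tendsto (fun k => ‖gradient f (x k)‖) atTop (𝓝 0) := by
    have h := (Real.continuous_sqrt.tendsto 0).comp hsq'
    have heq : (fun k => ‖gradient f (x k)‖)
        = fun k => Real.sqrt (‖gradient f (x k)‖ ^ 2) := by
      funext k; rw [Real.sqrt_sq (norm_nonneg _)]
    rw [heq]
    simpa [Function.comp_def, Real.sqrt_zero] using h
  have hgrad0 : Tendsto (fun k => gradient f (x k)) atTop (𝓝 0) := by
    rw [tendsto_zero_iff_norm_tendsto_zero]; exact hnorm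
  have hstep : Tendsto (fun k => dist (x (k + 1)) (x k)) atTop (𝓝 0) := by
    have heq : (fun k => dist (x (k + 1)) (x k)) = fun k => α * ‖gradient f (x k)‖ := by
      funext k
      rw [dist_eq_norm, hsucc k, hg]
      simp [sub_sub_cancel_left, norm_smul, abs_of_pos hα]
    rw [heq]
    simpa using hnorm.const_mul α
  set S := {p | p ∈ K ∧ ∃ ψ : ℕ → ℕ, Tendsto ψ atTop atTop ∧
    Tendsto (fun n => x (ψ n)) atTop (𝓝 p)} with hS_def
  obtain ⟨p, hpK, φ, hφmono, hφlim⟩ := hK.tendsto_subseq hxK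
  have hpS : p ∈ S := ⟨hpK, φ, hφmono.tendsto_atTop, hφlim⟩
  have hScrit : ∀ q ∈ S, gradient f q = 0 := by
    rintro q ⟨hqK, ψ, hψ, hψlim⟩
    have h1 : Tendsto (fun n => gradient f (x (ψ n))) atTop (𝓝 (gradient f q)) :=
      ((gd_gradient_continuous hf).tendsto q).comp hψlim
    have h2 : Tendsto (fun n => gradient f (x (ψ n))) atTop (𝓝 0) := hgrad0.comp hψ
    exact tendsto_nhds_unique h1 h2
  have hnear : ∀ ε > 0, ∀ᶠ k in atTop, ∃ s ∈ S, dist (x k) s < ε := by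
    intro ε hε
    by_contra hcon
    rw [Filter.not_eventually] at hcon
    obtain ⟨ψ, hψmono, hψ⟩ := extraction_of_frequently_atTop hcon
    obtain ⟨z, hzK, ms, hmsmono, hmslim⟩ := hK.tendsto_subseq (fun n => hxK (ψ n))
    have hzS : z ∈ S :=
      ⟨hzK, ψ ∘ ms, hψmono.tendsto_atTop.comp hmsmono.tendsto_atTop, hmslim⟩
    obtain ⟨N, hN⟩ := (Metric.tendsto_atTop.mp hmslim) ε hε
    exact hψ (ms N) ⟨z, hzS, hN N le_rfl⟩
  have hfreq : ∀ q ∈ S, ∀ ε > 0, ∃ᶠ k in atTop, dist (x k) q < ε := by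
    rintro q ⟨hqK, ψ, hψ, hψlim⟩ ε hε
    rw [Filter.frequently_atTop]
    intro N
    obtain ⟨M, hM⟩ := (Metric.tendsto_atTop.mp hψlim) ε hε
    obtain ⟨M2, hM2⟩ := Filter.eventually_atTop.mp (hψ.eventually_ge_atTop N)
    exact ⟨ψ (max M M2), hM2 _ (le_max_right _ _), hM _ (le_max_left _ _)⟩
  have huniq : ∀ q ∈ S, q = p := by
    intro q hqS
    by_contra hqp
    have hdpq : 0 < dist p q := dist_pos.mpr fun h => hqp h.symm
    obtain ⟨U, hU, hU1⟩ := hisolated p (hScrit p hpS)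
    obtain ⟨ε1, hε1, hball⟩ := Metric.mem_nhds_iff.mp hU
    set ε := min (ε1 / 3) (dist p q / 4) with hε_def
    have hε : 0 < ε := lt_min (by linarith) (by linarith)
    have hε3 : 3 * ε ≤ ε1 := by
      have := min_le_left (ε1 / 3) (dist p q / 4); linarith
    have hε4 : ε ≤ dist p q / 4 := min_le_right _ _
    have hkey : ∀ s ∈ S, dist s p < 3 * ε → s = p := by
      intro s hsS hd
      refine hU1 s (hball ?_) (hScrit s hsS)
      rw [Metric.mem_ball]
      linarith
    have hstepε : ∀ᶠ k in atTop, dist (x (k + 1)) (x k) < ε :=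
      hstep.eventually_lt_const hε
    obtain ⟨N, hN⟩ := Filter.eventually_atTop.mp (hstepε.and (hnear ε hε))
    obtain ⟨k0, hk0N, hk0p⟩ := Filter.frequently_atTop.mp (hfreq p hpS ε hε) N
    have hstay : ∀ k, k0 ≤ k → dist (x k) p < ε := by
      intro k hk
      induction k, hk using Nat.le_induction with
      | base => exact hk0p
      | succ n hn ih =>
        have hNn : N ≤ n := le_trans hk0N hn
        obtain ⟨hstepn, -⟩ := hN n hNn
        obtain ⟨-, s, hsS, hsn1⟩ := hN (n + 1) (by omega)
        have hd1 : dist (x (n + 1)) p < 2 * ε := by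
          have := dist_triangle (x (n + 1)) (x n) p
          linarith
        have hsp : dist s p < 3 * ε := by
          have h1 := dist_triangle s (x (n + 1)) p
          rw [dist_comm s (x (n + 1))] at h1
          linarith
        have := hkey s hsS hsp
        subst this
        linarith [hsn1, hd1]
    obtain ⟨k1, hk1, hk1q⟩ := Filter.frequently_atTop.mp (hfreq q hqS ε hε) k0
    have h1 := hstay k1 hk1
    have h2 := dist_triangle p (x k1) q
    rw [dist_comm p (x k1)] at h2
    linarith
  refine ⟨p, ?_, hScrit p hpS⟩
  apply tendsto_of_subseq_tendsto
  intro ns hns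
  obtain ⟨z, hzK, ms, hmsmono, hmslim⟩ := hK.tendsto_subseq (fun n => hxK (ns n))
  have hzS : z ∈ S := ⟨hzK, ns ∘ ms, hns.comp hmsmono.tendsto_atTop, hmslim⟩
  rw [huniq z hzS] at hmslim
  exact ⟨ms, hmslim⟩
end
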